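/- arXiv:2012.10368 — 8 statements merged into one kernel-verified Lean document; each statement's English description precedes it below -/
import Mathlib

section
/- Let n ≥ 2 be even and (α,β) ∈ Γ_n with α ≥ n² ≥ β. Then the squared L²(0,π)-norm of the normalized Fučík eigenfunction satisfies ‖f^n_{α,β}‖² = π/2 − π·n·(√α − n)/(2√α − n)². -/
open MeasureTheory Real Set Filter

noncomputable def L2normSq (f : ℝ → ℝ) : ℝ := ∫ x in Ioo (0:ℝ) π, (f x)^2

noncomputable def L2innerProd (f g : ℝ → ℝ) : ℝ := ∫ x in Ioo (0:ℝ) π, f x * g x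

/-- The Fučík spectral curve `Γ_n`. -/
def FucikCurve (n : ℕ) (a b : ℝ) : Prop :=
  1 < a ∧ 1 < b ∧
  (if Even n
    then ((n : ℝ)/2) * (π / Real.sqrt a) + ((n : ℝ)/2) * (π / Real.sqrt b) = π
    else (((n : ℝ)+1)/2) * (π / Real.sqrt a) + (((n : ℝ)-1)/2) * (π / Real.sqrt b) = π)

/-- The normalized Fučík eigenfunction `f^n_{a,b}`. -/
noncomputable def fucikEf (n : ℕ) (a b : ℝ) (x : ℝ) : ℝ :=
  if n = 1 then Real.sin x
  else
    let l1 := π / Real.sqrt a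
    let l2 := π / Real.sqrt b
    let l := l1 + l2
    let y := l * Int.fract (x / l)
    if (n : ℝ)^2 ≤ a then
      if y < l1 then (Real.sqrt b / Real.sqrt a) * Real.sin (Real.sqrt a * y)
      else - Real.sin (Real.sqrt b * (y - l1))
    else
      if y < l1 then Real.sin (Real.sqrt a * y)
      else - (Real.sqrt a / Real.sqrt b) * Real.sin (Real.sqrt b * (y - l1))

/-- A Fučík system, given by mappings `a b : ℕ → ℝ`. -/
structure FucikSystem (a b : ℕ → ℝ) : Prop where
  one_a : a 1 = 1
  one_b : b 1 = 1
  curve : ∀ n, 2 ≤ n → FucikCurve n (a n) (b n)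

/-- `{ψ_n}_{n ≥ 1}` is a Riesz basis of `L²(0,π)`: its span is dense and the two-sided
frame inequalities hold. -/
def IsRieszBasis (ψ : ℕ → ℝ → ℝ) : Prop :=
  (∀ g : ℝ → ℝ, MeasureTheory.MemLp g 2 (MeasureTheory.volume.restrict (Ioo (0:ℝ) π)) →
    ∀ ε : ℝ, 0 < ε → ∃ (N : ℕ) (s : ℕ → ℝ),
      L2normSq (fun x => g x - ∑ n ∈ Finset.Icc 1 N, s n * ψ n x) < ε) ∧
  (∃ c : ℝ, 0 < c ∧ ∃ C : ℝ, 0 < C ∧ ∀ (N : ℕ) (s : ℕ → ℝ),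
      c * ∑ n ∈ Finset.Icc 1 N, (s n)^2
        ≤ L2normSq (fun x => ∑ n ∈ Finset.Icc 1 N, s n * ψ n x) ∧
      L2normSq (fun x => ∑ n ∈ Finset.Icc 1 N, s n * ψ n x)
        ≤ C * ∑ n ∈ Finset.Icc 1 N, (s n)^2)


theorem fucik_normSq_even_a_ge (n : ℕ) (hn : 2 ≤ n) (hne : Even n) (a b : ℝ)
    (hΓ : FucikCurve n a b) (ha : (n:ℝ)^2 ≤ a) (hb : b ≤ (n:ℝ)^2) :
    L2normSq (fucikEf n a b)
      = π/2 - π*(n:ℝ)*(Real.sqrt a - (n:ℝ))/(2*Real.sqrt a - (n:ℝ))^2 := by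
  classical
  obtain ⟨ha1, hb1, hcurve0⟩ := hΓ
  rw [if_pos hne] at hcurve0
  set s := Real.sqrt a with hs_def
  set t := Real.sqrt b with ht_def
  have hs0 : 0 < s := Real.sqrt_pos.2 (by linarith)
  have ht0 : 0 < t := Real.sqrt_pos.2 (by linarith)
  have hn0 : (0:ℝ) < (n:ℝ) := by exact_mod_cast Nat.pos_of_ne_zero (by omega)
  have hns : (n:ℝ) ≤ s := by
    have h := Real.sqrt_le_sqrt ha
    rwa [Real.sqrt_sq hn0.le, ← hs_def] at h
  have hts : t ≤ s := by
    rw [hs_def, ht_def]; exact Real.sqrt_le_sqrt (hb.trans ha)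
  set l1 : ℝ := π / s with hl1_def
  set l2 : ℝ := π / t with hl2_def
  set l : ℝ := l1 + l2 with hl_def
  clear_value l
  clear_value l2
  clear_value l1
  clear_value t
  clear_value s
  have hl1 : 0 < l1 := by rw [hl1_def]; positivity
  have hl2 : 0 < l2 := by rw [hl2_def]; positivity
  have hl0 : 0 < l := by rw [hl_def]; positivity
  have hsl1 : s * l1 = π := by rw [hl1_def]; field_simp
  have htl2 : t * l2 = π := by rw [hl2_def]; field_simp
  have hll2 : l - l1 = l2 := by rw [hl_def]; ring
  have hnl : (n:ℝ)/2 * l = π := by rw [hl_def, mul_add]; linarith [hcurve0]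
  obtain ⟨m, hm⟩ := hne
  have hmn : (n:ℝ) = 2 * (m:ℝ) := by rw [hm]; push_cast; ring
  have hπl : π = (m:ℝ) * l := by rw [← hnl, hmn]; ring
  have hn1 : ¬ n = 1 := by omega
  set F : ℝ → ℝ := fun x => if l * Int.fract (x / l) < l1
      then (t/s) * Real.sin (s * (l * Int.fract (x / l)))
      else - Real.sin (t * (l * Int.fract (x / l) - l1)) with hF_def
  clear_value F
  have hfF : fucikEf n a b = F := by
    funext x
    simp only [fucikEf, hn1, if_false, ha, if_true, hF_def, ← hs_def, ← ht_def,
      ← hl1_def, ← hl2_def, ← hl_def]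
  set g : ℝ → ℝ := fun x => F x ^ 2 with hg_def
  clear_value g
  have hFm : Measurable F := by
    rw [hF_def]
    have hm1 : Measurable (fun x : ℝ => l * Int.fract (x / l)) :=
      ((measurable_id.div_const l).fract).const_mul l
    exact Measurable.ite (measurableSet_lt hm1 measurable_const)
      ((Real.measurable_sin.comp ((hm1.const_mul s))).const_mul _)
      ((Real.measurable_sin.comp ((hm1.sub_const l1).const_mul t)).neg)
  have hFb : ∀ x, |F x| ≤ 1 := by
    intro x
    have hts1 : t / s ≤ 1 := (div_le_one hs0).2 hts
    rw [hF_def]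
    dsimp only
    split_ifs with h
    · rw [abs_mul]
      have h1 : |Real.sin (s * (l * Int.fract (x / l)))| ≤ 1 :=
        abs_le.2 ⟨Real.neg_one_le_sin _, Real.sin_le_one _⟩
      have h2 : |t/s| = t/s := abs_of_pos (by positivity)
      nlinarith [abs_nonneg (Real.sin (s * (l * Int.fract (x / l))))]
    · rw [abs_neg]
      exact abs_le.2 ⟨Real.neg_one_le_sin _, Real.sin_le_one _⟩
  have hg_int : ∀ t1 t2 : ℝ, IntervalIntegrable g volume t1 t2 := by
    intro t1 t2
    rw [intervalIntegrable_iff]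
    apply MeasureTheory.Measure.integrableOn_of_bounded (M := 1) (measure_Ioc_lt_top).ne
      (by rw [hg_def]; exact (hFm.pow_const 2).aestronglyMeasurable)
    refine Filter.Eventually.of_forall fun x => ?_
    have hb1 := hFb x
    rw [hg_def]
    simp only [norm_eq_abs, abs_pow]
    nlinarith [abs_nonneg (F x)]
  have hFper : Function.Periodic F l := by
    intro x
    have hdiv : (x + l) / l = x / l + 1 := by
      rw [add_div, div_self hl0.ne']
    rw [hF_def]
    simp only [hdiv, Int.fract_add_one]
  have hgper : Function.Periodic g l := fun x => by rw [hg_def]; simp only [hFper x]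
  have hfr : ∀ x : ℝ, 0 ≤ x → x < l → l * Int.fract (x / l) = x := by
    intro x h0 h1
    rw [Int.fract_eq_self.2 ⟨by positivity, by rwa [div_lt_one hl0]⟩,
      mul_comm, div_mul_cancel₀ x hl0.ne']
  have hFval1 : ∀ x : ℝ, 0 ≤ x → x < l1 → F x = (t/s) * Real.sin (s*x) := by
    intro x h0 h1
    have hy : l * Int.fract (x / l) = x := hfr x h0 (by linarith)
    rw [hF_def]
    simp only [hy, if_pos h1]
  have hFval1e : F l1 = 0 := by
    have hy : l * Int.fract (l1 / l) = l1 := hfr l1 hl1.le (by linarith)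
    rw [hF_def]
    simp only [hy, if_neg (lt_irrefl l1), sub_self, mul_zero, Real.sin_zero, neg_zero]
  have hFval2 : ∀ x : ℝ, l1 ≤ x → x < l → F x = - Real.sin (t*(x - l1)) := by
    intro x h0 h1
    have hy : l * Int.fract (x / l) = x := hfr x (by linarith) h1
    rw [hF_def]
    simp only [hy, if_neg (not_lt.2 h0)]
  have hFvalle : F l = 0 := by
    have hy : l * Int.fract (l / l) = 0 := by
      rw [div_self hl0.ne']
      norm_num
    rw [hF_def]
    simp only [hy, if_pos hl1, mul_zero, Real.sin_zero]
  -- first piece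
  have hI1 : ∫ x in (0:ℝ)..l1, g x = (t/s)^2 * (l1/2) := by
    have hcongr : ∫ x in (0:ℝ)..l1, g x = ∫ x in (0:ℝ)..l1, ((t/s) * Real.sin (s*x))^2 := by
      apply intervalIntegral.integral_congr
      intro x hx
      rw [uIcc_of_le hl1.le] at hx
      rw [hg_def]
      show F x ^ 2 = ((t/s) * Real.sin (s*x))^2
      rcases lt_or_eq_of_le hx.2 with h | h
      · rw [hFval1 x hx.1 h]
      · rw [h, hFval1e, hsl1, Real.sin_pi, mul_zero]
    rw [hcongr]
    have h1 : ∀ x : ℝ, ((t/s) * Real.sin (s*x))^2 = (t/s)^2 * (Real.sin (s*x))^2 := by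
      intro x; ring
    simp only [h1]
    rw [intervalIntegral.integral_const_mul]
    have h := intervalIntegral.integral_comp_mul_left (fun x => Real.sin x ^ 2)
      (ne_of_gt hs0) (a := 0) (b := l1)
    simp only [mul_zero] at h
    rw [h, hsl1, integral_sin_sq, Real.sin_zero, Real.sin_pi, hl1_def]
    simp only [smul_eq_mul]
    ring
  -- second piece
  have hI2 : ∫ x in l1..l, g x = l2/2 := by
    have hcongr : ∫ x in l1..l, g x = ∫ x in l1..l, (Real.sin (t*(x - l1)))^2 := by
      apply intervalIntegral.integral_congr
      intro x hx
      rw [uIcc_of_le (by linarith : l1 ≤ l)] at hx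
      rw [hg_def]
      show F x ^ 2 = (Real.sin (t*(x - l1)))^2
      rcases lt_or_eq_of_le hx.2 with h | h
      · rw [hFval2 x hx.1 h]; ring
      · have h2 : t * (l - l1) = π := by rw [hll2, htl2]
        rw [h, hFvalle, h2, Real.sin_pi]
    rw [hcongr]
    have h := intervalIntegral.integral_comp_sub_right (fun x => Real.sin (t*x) ^ 2) l1
      (a := l1) (b := l)
    rw [h, sub_self, hll2]
    have h2 := intervalIntegral.integral_comp_mul_left (fun x => Real.sin x ^ 2)
      (ne_of_gt ht0) (a := 0) (b := l2)
    simp only [mul_zero] at h2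
    rw [h2, htl2, integral_sin_sq, Real.sin_zero, Real.sin_pi, hl2_def]
    simp only [smul_eq_mul]
    ring
  -- assemble
  have hmain : L2normSq (fucikEf n a b) = (m:ℝ) * ((t/s)^2 * (l1/2) + l2/2) := by
    rw [L2normSq, hfF]
    have e1 : ∫ x in Ioo (0:ℝ) π, (F x)^2 = ∫ x in (0:ℝ)..π, g x := by
      rw [intervalIntegral.integral_of_le Real.pi_pos.le,
        MeasureTheory.integral_Ioc_eq_integral_Ioo, hg_def]
    rw [e1]
    have key := hgper.intervalIntegral_add_zsmul_eq (m:ℤ) 0 hg_int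
    simp only [zero_add, zsmul_eq_mul, Int.cast_natCast] at key
    rw [hπl, key,
      ← intervalIntegral.integral_add_adjacent_intervals (hg_int 0 l1) (hg_int l1 l),
      hI1, hI2]
  rw [hmain]
  -- final algebra
  have h2sn : (0:ℝ) < 2*s - n := by linarith
  have H : (n:ℝ)/2 * π * t + (n:ℝ)/2 * π * s = π * (s * t) := by
    have h1 : ((n:ℝ)/2 * l1 + (n:ℝ)/2 * l2) * (s*t) = π * (s*t) := by rw [hcurve0]
    calc (n:ℝ)/2 * π * t + (n:ℝ)/2 * π * s
        = (n:ℝ)/2 * (s * l1) * t + (n:ℝ)/2 * (t * l2) * s := by rw [hsl1, htl2]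
      _ = ((n:ℝ)/2 * l1 + (n:ℝ)/2 * l2) * (s*t) := by ring
      _ = π * (s * t) := h1
  have hrel : t * (2*s - n) = (n:ℝ) * s := by
    have h3 : π * (t * (2*s - n)) = π * ((n:ℝ) * s) := by linear_combination (-2) * H
    exact mul_left_cancel₀ Real.pi_ne_zero h3
  have htv : t = (n:ℝ) * s / (2*s - n) := (eq_div_iff h2sn.ne').2 hrel
  rw [hl1_def, hl2_def, htv]
  have hmr : (m:ℝ) = (n:ℝ) / 2 := by rw [hmn]; ring
  rw [hmr]
  field_simp [h2sn.ne']
  ring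
end

section
/- Let n ≥ 3 be odd and (α,β) ∈ Γ_n with α ≥ n² ≥ β. Then ‖f^n_{α,β}‖² = π/2 − π·(n+1)·(√α − 1)·(√α − n)/(√α·(2√α − (n+1))²). -/
open MeasureTheory Real Set Filter

lemma fucikEf_eq (n : ℕ) (hn1 : n ≠ 1) {a : ℝ} (b : ℝ) (ha : (n:ℝ)^2 ≤ a) (x : ℝ) :
    fucikEf n a b x =
      (if (π / Real.sqrt a + π / Real.sqrt b) * Int.fract (x / (π / Real.sqrt a + π / Real.sqrt b)) < π / Real.sqrt a
       then (Real.sqrt b / Real.sqrt a) *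
         Real.sin (Real.sqrt a * ((π / Real.sqrt a + π / Real.sqrt b) * Int.fract (x / (π / Real.sqrt a + π / Real.sqrt b))))
       else - Real.sin (Real.sqrt b * ((π / Real.sqrt a + π / Real.sqrt b) * Int.fract (x / (π / Real.sqrt a + π / Real.sqrt b)) - π / Real.sqrt a))) := by
  simp only [fucikEf, if_neg hn1, if_pos ha]
set_option maxHeartbeats 1000000

theorem fucik_normSq_odd_a_ge (n : ℕ) (hn : 3 ≤ n) (hno : Odd n) (a b : ℝ)
    (hΓ : FucikCurve n a b) (ha : (n:ℝ)^2 ≤ a) (hb : b ≤ (n:ℝ)^2) :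
    L2normSq (fucikEf n a b)
      = π/2 - π*((n:ℝ)+1)*(Real.sqrt a - 1)*(Real.sqrt a - (n:ℝ))
          /(Real.sqrt a*(2*Real.sqrt a - ((n:ℝ)+1))^2) := by
  have hn1 : n ≠ 1 := by omega
  obtain ⟨m, hm⟩ := hno
  have hm1 : 1 ≤ m := by omega
  set s := Real.sqrt a with hs_def
  set t := Real.sqrt b with ht_def
  have hmr : (1:ℝ) ≤ (m:ℝ) := by exact_mod_cast hm1
  have hsn : (n:ℝ) ≤ s := by
    have h1 : Real.sqrt ((n:ℝ)^2) ≤ s := Real.sqrt_le_sqrt ha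
    rwa [Real.sqrt_sq (by positivity)] at h1
  have hs3 : (3:ℝ) ≤ s := le_trans (by exact_mod_cast hn) hsn
  have ht1 : 1 < t := by
    have : Real.sqrt 1 < Real.sqrt b := Real.sqrt_lt_sqrt (by norm_num) hΓ.2.1
    simpa using this
  have hs0 : (0:ℝ) < s := by linarith
  have ht0 : (0:ℝ) < t := by linarith
  set l1 : ℝ := π / s with hl1_def
  set l2 : ℝ := π / t with hl2_def
  set l : ℝ := l1 + l2 with hl_def
  have hπ : (0:ℝ) < π := Real.pi_pos
  have hl1 : 0 < l1 := by positivity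
  have hl2 : 0 < l2 := by positivity
  have hl0 : 0 < l := by positivity
  have hsl1 : s * l1 = π := by rw [hl1_def]; field_simp
  have htl2 : t * l2 = π := by rw [hl2_def]; field_simp
  have hne : ¬ Even n := by rw [Nat.even_iff]; omega
  have hcurve := hΓ.2.2
  rw [if_neg hne] at hcurve
  have hncast : (n:ℝ) = 2*(m:ℝ) + 1 := by exact_mod_cast congrArg Nat.cast hm
  have h_pi : ((m:ℝ)+1) * l1 + (m:ℝ) * l2 = π := by
    rw [hncast] at hcurve; rw [hl1_def, hl2_def]; linarith
  -- floor computation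
  have hfloor : ∀ (k:ℕ) (x:ℝ), (k:ℝ)*l ≤ x → x < (k:ℝ)*l + l →
      l * Int.fract (x/l) = x - (k:ℝ)*l := by
    intro k x h1 h2
    have hfl : ⌊x/l⌋ = (k:ℤ) := by
      rw [Int.floor_eq_iff]
      constructor
      · push_cast; rw [le_div_iff₀ hl0]; linarith
      · push_cast; rw [div_lt_iff₀ hl0]; linarith
    rw [Int.fract, hfl]
    push_cast
    field_simp
  -- pointwise formulas
  have hP1 : ∀ (k : ℕ) (x : ℝ), x ∈ Set.Icc ((k:ℝ)*l) ((k:ℝ)*l + l1) →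
      fucikEf n a b x = (t/s) * Real.sin (s*(x - (k:ℝ)*l)) := by
    intro k x hx
    obtain ⟨hx1, hx2⟩ := hx
    rw [fucikEf_eq n hn1 b ha x, ← hs_def, ← ht_def, ← hl1_def, ← hl2_def, ← hl_def]
    rw [hfloor k x hx1 (by linarith)]
    by_cases hxe : x - (k:ℝ)*l < l1
    · rw [if_pos hxe]
    · rw [if_neg hxe]
      have h1 : x - (k:ℝ)*l = l1 := le_antisymm (by linarith) (not_lt.mp hxe)
      rw [h1, sub_self, mul_zero, Real.sin_zero, neg_zero, hsl1, Real.sin_pi, mul_zero]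
  have hP2 : ∀ (k : ℕ) (x : ℝ), x ∈ Set.Icc ((k:ℝ)*l + l1) ((k:ℝ)*l + l) →
      fucikEf n a b x = - Real.sin (t*(x - (k:ℝ)*l - l1)) := by
    intro k x hx
    obtain ⟨hx1, hx2⟩ := hx
    rw [fucikEf_eq n hn1 b ha x, ← hs_def, ← ht_def, ← hl1_def, ← hl2_def, ← hl_def]
    by_cases hxe : x < (k:ℝ)*l + l
    · rw [hfloor k x (by linarith) hxe]
      rw [if_neg (by linarith)]
    · have hxeq : x = (k:ℝ)*l + l := le_antisymm hx2 (not_lt.mp hxe)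
      have hxl : x / l = ((k+1:ℕ):ℝ) := by rw [hxeq]; push_cast; field_simp
      rw [hxl, Int.fract_natCast, mul_zero, if_pos hl1, mul_zero, Real.sin_zero, mul_zero]
      have : x - (k:ℝ)*l - l1 = l2 := by rw [hxeq, hl_def]; ring
      rw [this, htl2, Real.sin_pi, neg_zero]
  -- piece integrals
  have hint1 : ∀ k : ℕ,
      ∫ x in ((k:ℝ)*l)..((k:ℝ)*l + l1), (fucikEf n a b x)^2 = (t/s)^2 * (π/2) / s := by
    intro k
    rw [intervalIntegral.integral_congr (g := fun x => ((t/s) * Real.sin (s*(x - (k:ℝ)*l)))^2)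
      (by intro x hx
          rw [Set.uIcc_of_le (by linarith)] at hx
          exact congrArg (fun y => y^2) (hP1 k x hx))]
    simp_rw [mul_pow]
    rw [intervalIntegral.integral_const_mul]
    rw [intervalIntegral.integral_comp_sub_right (fun u => Real.sin (s*u)^2) ((k:ℝ)*l)]
    rw [sub_self, add_sub_cancel_left]
    rw [intervalIntegral.integral_comp_mul_left (fun u => Real.sin u^2) (ne_of_gt hs0)]
    rw [mul_zero, hsl1, integral_sin_sq]
    simp [Real.sin_pi]
    ring
  have hint2 : ∀ k : ℕ,
      ∫ x in ((k:ℝ)*l + l1)..((k:ℝ)*l + l), (fucikEf n a b x)^2 = (π/2) / t := by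
    intro k
    rw [intervalIntegral.integral_congr (g := fun x => (- Real.sin (t*(x - (k:ℝ)*l - l1)))^2)
      (by intro x hx
          rw [Set.uIcc_of_le (by linarith)] at hx
          exact congrArg (fun y => y^2) (hP2 k x hx))]
    simp_rw [neg_sq, sub_sub]
    rw [intervalIntegral.integral_comp_sub_right (fun u => Real.sin (t*u)^2) ((k:ℝ)*l + l1)]
    rw [sub_self, add_sub_add_left_eq_sub, hl_def, add_sub_cancel_left]
    rw [intervalIntegral.integral_comp_mul_left (fun u => Real.sin u^2) (ne_of_gt ht0)]
    rw [mul_zero, htl2, integral_sin_sq]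
    simp [Real.sin_pi]
    ring
  -- partition
  set p : ℕ → ℝ := fun i => (↑(i / 2) : ℝ) * l + (if i % 2 = 1 then l1 else 0) with hp_def
  have hp_even : ∀ k : ℕ, p (2*k) = (k:ℝ)*l := by
    intro k
    have h1 : (2*k)/2 = k := by omega
    have h2 : (2*k) % 2 = 0 := by omega
    simp [hp_def, h1, h2]
  have hp_odd : ∀ k : ℕ, p (2*k+1) = (k:ℝ)*l + l1 := by
    intro k
    have h1 : (2*k+1)/2 = k := by omega
    have h2 : (2*k+1) % 2 = 1 := by omega
    simp [hp_def, h1, h2]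
  have hmono : ∀ i : ℕ, p i ≤ p (i+1) := by
    intro i
    rcases Nat.even_or_odd i with ⟨k,hk⟩ | ⟨k,hk⟩
    · have : i = 2*k := by omega
      rw [this, hp_even k, show 2*k+1 = 2*k+1 from rfl, hp_odd k]
      linarith
    · have : i = 2*k+1 := by omega
      rw [this, hp_odd k, show 2*k+1+1 = 2*(k+1) from rfl, hp_even (k+1)]
      push_cast; nlinarith
  -- piece values
  have hpiece : ∀ i : ℕ, ∫ x in p i..p (i+1), (fucikEf n a b x)^2
      = if i % 2 = 0 then (t/s)^2 * (π/2) / s else (π/2) / t := by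
    intro i
    rcases Nat.even_or_odd i with ⟨k,hk⟩ | ⟨k,hk⟩
    · have hi : i = 2*k := by omega
      rw [hi, hp_even k, show 2*k+1 = 2*k+1 from rfl, hp_odd k, hint1 k, if_pos (by omega)]
    · have hi : i = 2*k+1 := by omega
      have h2 : p (2*k+1+1) = (k:ℝ)*l + l := by
        rw [show 2*k+1+1 = 2*(k+1) from rfl, hp_even (k+1)]; push_cast; ring
      rw [hi, hp_odd k, h2, hint2 k, if_neg (by omega)]
  -- integrability
  have hinteg : ∀ i : ℕ, IntervalIntegrable (fun x => (fucikEf n a b x)^2) volume (p i) (p (i+1)) := by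
    intro i
    rw [intervalIntegrable_iff_integrableOn_Ioc_of_le (hmono i)]
    rcases Nat.even_or_odd i with ⟨k,hk⟩ | ⟨k,hk⟩
    · have hi : i = 2*k := by omega
      rw [hi, hp_even k, show 2*k+1 = 2*k+1 from rfl, hp_odd k]
      have hc : IntegrableOn (fun x => ((t/s) * Real.sin (s*(x - (k:ℝ)*l)))^2)
          (Set.Ioc ((k:ℝ)*l) ((k:ℝ)*l + l1)) volume := by
        apply Continuous.integrableOn_Ioc
        fun_prop
      exact hc.congr_fun (fun x hx => (congrArg (fun y => y^2) (hP1 k x ⟨le_of_lt hx.1, hx.2⟩)).symm) measurableSet_Ioc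
    · have hi : i = 2*k+1 := by omega
      have h2 : p (2*k+1+1) = (k:ℝ)*l + l := by
        rw [show 2*k+1+1 = 2*(k+1) from rfl, hp_even (k+1)]; push_cast; ring
      rw [hi, hp_odd k, h2]
      have hc : IntegrableOn (fun x => (- Real.sin (t*(x - (k:ℝ)*l - l1)))^2)
          (Set.Ioc ((k:ℝ)*l + l1) ((k:ℝ)*l + l)) volume := by
        apply Continuous.integrableOn_Ioc
        fun_prop
      exact hc.congr_fun (fun x hx => (congrArg (fun y => y^2) (hP2 k x ⟨le_of_lt hx.1, hx.2⟩)).symm) measurableSet_Ioc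
  -- sum over partition
  have hsum := intervalIntegral.sum_integral_adjacent_intervals
    (f := fun x => (fucikEf n a b x)^2) (μ := volume) (a := p) (n := 2*m+1)
    (fun k _ => hinteg k)
  have hp0 : p 0 = 0 := by simp [hp_def]
  have hpN : p (2*m+1) = π := by
    rw [hp_odd m, hl_def]
    linarith [h_pi]
  have hsumval : ∑ i ∈ Finset.range (2*m+1),
      (if i % 2 = 0 then (t/s)^2 * (π/2) / s else (π/2) / t)
      = ((m:ℝ)+1) * ((t/s)^2 * (π/2) / s) + (m:ℝ) * ((π/2) / t) := by
    have haux : ∀ M : ℕ, ∑ i ∈ Finset.range (2*M+1),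
        (if i % 2 = 0 then (t/s)^2 * (π/2) / s else (π/2) / t)
        = ((M:ℝ)+1) * ((t/s)^2 * (π/2) / s) + (M:ℝ) * ((π/2) / t) := by
      intro M
      induction M with
      | zero => simp
      | succ M ih =>
        rw [show 2*(M+1)+1 = (2*M+1)+1+1 by ring, Finset.sum_range_succ, Finset.sum_range_succ, ih]
        rw [if_neg (by omega), if_pos (by omega)]
        push_cast; ring
    exact haux m
  have hmain : L2normSq (fucikEf n a b)
      = ((m:ℝ)+1) * ((t/s)^2 * (π/2) / s) + (m:ℝ) * ((π/2) / t) := by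
    calc L2normSq (fucikEf n a b)
        = ∫ x in (0:ℝ)..π, (fucikEf n a b x)^2 := by
          rw [L2normSq, intervalIntegral.integral_of_le (le_of_lt hπ),
            MeasureTheory.integral_Ioc_eq_integral_Ioo]
      _ = ∑ k ∈ Finset.range (2*m+1), ∫ x in p k..p (k+1), (fucikEf n a b x)^2 := by
          rw [hp0, hpN] at hsum; exact hsum.symm
      _ = ∑ i ∈ Finset.range (2*m+1), (if i % 2 = 0 then (t/s)^2*(π/2)/s else (π/2)/t) :=
          Finset.sum_congr rfl (fun i _ => hpiece i)
      _ = ((m:ℝ)+1) * ((t/s)^2 * (π/2) / s) + (m:ℝ) * ((π/2) / t) := hsumval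
  rw [hmain, hncast]
  -- algebra
  have hrel : ((m:ℝ)+1)*t + (m:ℝ)*s = s*t := by
    have hπ' : π ≠ 0 := ne_of_gt hπ
    calc ((m:ℝ)+1)*t + (m:ℝ)*s
        = (((m:ℝ)+1)*l1 + (m:ℝ)*l2)*(s*t/π) := by
          rw [hl1_def, hl2_def]; field_simp
      _ = π*(s*t/π) := by rw [h_pi]
      _ = s*t := by field_simp
  have hsm : (m:ℝ)+1 < s := by rw [hncast] at hsn; linarith
  have ht_eq : t = (m:ℝ)*s/(s - ((m:ℝ)+1)) := by
    rw [eq_div_iff (by linarith)]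
    linear_combination -hrel
  rw [ht_eq]
  have h1 : s ≠ 0 := ne_of_gt hs0
  have h2 : s - ((m:ℝ)+1) ≠ 0 := by linarith
  have h3 : (m:ℝ) ≠ 0 := by linarith
  have h4 : 2*s - (2*(m:ℝ)+1+1) ≠ 0 := by linarith
  rw [show 2*s - (2*(m:ℝ)+1+1) = 2*(s - ((m:ℝ)+1)) by ring]
  field_simp
  ring
end

section
/- Let n ≥ 2 be even and (α,β) ∈ Γ_n with β > n² > α. Then ‖f^n_{α,β}‖² = π/2 − π·n·(√β − n)/(2√β − n)². -/
open MeasureTheory Real Set Filter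

lemma fucik_measurable (n : ℕ) (a b : ℝ) : Measurable (fucikEf n a b) := by
  unfold fucikEf
  by_cases h1 : n = 1
  · simp only [h1, if_true]; exact Real.measurable_sin
  · simp only [h1, if_false]
    set sa := Real.sqrt a
    set sb := Real.sqrt b
    set l : ℝ := π / sa + π / sb with hl
    have hy : Measurable (fun x : ℝ => l * Int.fract (x / l)) :=
      (measurable_fract.comp (measurable_id.div_const l)).const_mul l
    have hset : MeasurableSet {x : ℝ | l * Int.fract (x / l) < π / sa} :=
      measurableSet_lt hy measurable_const
    by_cases h2 : (n:ℝ)^2 ≤ a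
    · simp only [h2, if_true]
      exact Measurable.ite hset
        ((Real.measurable_sin.comp (hy.const_mul sa)).const_mul _)
        ((Real.measurable_sin.comp ((hy.sub_const _).const_mul sb)).neg)
    · simp only [h2, if_false]
      exact Measurable.ite hset
        (Real.measurable_sin.comp (hy.const_mul sa))
        ((Real.measurable_sin.comp ((hy.sub_const _).const_mul sb)).const_mul _)

set_option maxHeartbeats 1000000 in
theorem fucik_normSq_even_b_gt (n : ℕ) (hn : 2 ≤ n) (hne : Even n) (a b : ℝ)
    (hΓ : FucikCurve n a b) (hb : (n:ℝ)^2 < b) (ha : a < (n:ℝ)^2) :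
    L2normSq (fucikEf n a b)
      = π/2 - π*(n:ℝ)*(Real.sqrt b - (n:ℝ))/(2*Real.sqrt b - (n:ℝ))^2 := by
  obtain ⟨ha1, hb1, hcurve⟩ := hΓ
  rw [if_pos hne] at hcurve
  have hn1 : n ≠ 1 := by omega
  have hna : ¬ ((n:ℝ)^2 ≤ a) := not_le.mpr ha
  set sa := Real.sqrt a with hsa
  set sb := Real.sqrt b with hsbdef
  have hsa0 : 0 < sa := Real.sqrt_pos.mpr (by linarith)
  have hsb0 : 0 < sb := Real.sqrt_pos.mpr (by linarith)
  have hπ : (0:ℝ) < π := Real.pi_pos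
  have hn0 : (0:ℝ) < n := by positivity
  have hsbn : (n:ℝ) < sb := by
    have h := Real.sqrt_lt_sqrt (by positivity : (0:ℝ) ≤ (n:ℝ)^2) hb
    rwa [Real.sqrt_sq hn0.le] at h
  set l1 : ℝ := π / sa with hl1
  set l2 : ℝ := π / sb with hl2
  set l : ℝ := l1 + l2 with hldef
  have hl10 : 0 < l1 := by positivity
  have hl20 : 0 < l2 := by positivity
  have hl0 : 0 < l := by positivity
  have hl1l : l1 < l := by linarith
  have hsal1 : sa * l1 = π := by rw [hl1]; field_simp
  have hsbl2 : sb * l2 = π := by rw [hl2]; field_simp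
  -- explicit form
  have hef : ∀ x : ℝ, fucikEf n a b x =
      (if l * Int.fract (x / l) < l1 then Real.sin (sa * (l * Int.fract (x / l)))
       else - (sa / sb) * Real.sin (sb * (l * Int.fract (x / l) - l1))) := by
    intro x
    simp only [fucikEf, hn1, if_false, hna, ← hsa, ← hsbdef, ← hl1, ← hl2, ← hldef]
  set g : ℝ → ℝ := fun x => (fucikEf n a b x)^2 with hg
  -- periodicity
  have hper : Function.Periodic g l := by
    intro x
    have hfrac : Int.fract ((x + l) / l) = Int.fract (x / l) := by
      have h : (x + l) / l = x / l + 1 := by field_simp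
      rw [h, Int.fract_add_one]
    simp only [hg, hef, hfrac]
  -- pointwise bound
  have habs : ∀ x : ℝ, |fucikEf n a b x| ≤ 1 + sa / sb := by
    intro x
    have hd : 0 ≤ sa / sb := by positivity
    rw [hef x]
    split_ifs with h
    · have := Real.abs_sin_le_one (sa * (l * Int.fract (x / l)))
      linarith
    · rw [abs_mul, abs_neg, abs_of_nonneg hd]
      have := Real.abs_sin_le_one (sb * (l * Int.fract (x / l) - l1))
      nlinarith
  -- integrability
  have hint : ∀ t₁ t₂ : ℝ, IntervalIntegrable g volume t₁ t₂ := by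
    intro t₁ t₂
    rw [intervalIntegrable_iff]
    apply Measure.integrableOn_of_bounded (M := (1 + sa/sb)^2) measure_Ioc_lt_top.ne
      ((fucik_measurable n a b).pow_const 2).aestronglyMeasurable
    refine ae_of_all _ fun x => ?_
    rw [Real.norm_eq_abs, abs_pow]
    exact pow_le_pow_left₀ (abs_nonneg _) (habs x) 2
  -- fract identity on [0, l)
  have hfr_self : ∀ x : ℝ, 0 ≤ x → x < l → l * Int.fract (x / l) = x := by
    intro x h0 h1
    rw [Int.fract_eq_self.mpr ⟨by positivity, by rwa [div_lt_one hl0]⟩]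
    field_simp
  -- half of n
  obtain ⟨m, hm⟩ := hne
  have hm2 : (n:ℝ) = 2 * m := by rw [hm]; push_cast; ring
  have hπeq : (m:ℝ) * l = π := by
    rw [hldef, hl1, hl2]
    rw [hm2] at hcurve
    linear_combination hcurve
  -- reduce Ioo integral to interval integral
  have step0 : L2normSq (fucikEf n a b) = ∫ x in (0:ℝ)..π, g x := by
    rw [L2normSq, intervalIntegral.integral_of_le hπ.le, integral_Ioc_eq_integral_Ioo]
  -- periodic reduction
  have step1 : ∫ x in (0:ℝ)..π, g x = (m:ℝ) * ∫ x in (0:ℝ)..l, g x := by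
    have h := hper.intervalIntegral_add_zsmul_eq (m:ℤ) 0 hint
    simp only [zero_add, zsmul_eq_mul, Int.cast_natCast] at h
    rw [← hπeq]
    exact h
  -- split the one-period integral
  have hsplit : ∫ x in (0:ℝ)..l, g x = (∫ x in (0:ℝ)..l1, g x) + ∫ x in l1..l, g x :=
    (intervalIntegral.integral_add_adjacent_intervals (hint 0 l1) (hint l1 l)).symm
  -- first piece
  have hI1 : ∫ x in (0:ℝ)..l1, g x = ∫ x in (0:ℝ)..l1, (Real.sin (sa * x))^2 := by
    apply intervalIntegral.integral_congr
    intro x hx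
    rw [uIcc_of_le hl10.le] at hx
    have hy : l * Int.fract (x / l) = x := hfr_self x hx.1 (lt_of_le_of_lt hx.2 hl1l)
    rcases eq_or_lt_of_le hx.2 with h | h
    · simp only [hg]
      rw [hef x, hy, if_neg (not_lt.mpr (le_of_eq h.symm)), h, sub_self, mul_zero,
        Real.sin_zero, hsal1, Real.sin_pi]
      ring
    · simp only [hg]
      rw [hef x, hy, if_pos h]
  have hv1 : ∫ x in (0:ℝ)..l1, (Real.sin (sa * x))^2 = π / (2 * sa) := by
    rw [intervalIntegral.integral_comp_mul_left (fun u => Real.sin u ^ 2) hsa0.ne']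
    rw [mul_zero, hsal1, integral_sin_sq]
    have h0 : (Real.sin 0 * Real.cos 0 - Real.sin π * Real.cos π + π - 0) / 2 = π / 2 := by
      simp
    rw [h0, smul_eq_mul, inv_mul_eq_div, div_div]
  -- second piece
  have hI2 : ∫ x in l1..l, g x = ∫ x in l1..l, ((sa/sb) * Real.sin (sb * (x - l1)))^2 := by
    apply intervalIntegral.integral_congr
    intro x hx
    rw [uIcc_of_le hl1l.le] at hx
    rcases eq_or_lt_of_le hx.2 with h | h
    · have hfr : Int.fract (x / l) = 0 := by
        rw [h, div_self hl0.ne', Int.fract_one]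
      have hll : l - l1 = l2 := by rw [hldef]; ring
      simp only [hg]
      rw [hef x, hfr, mul_zero, if_pos hl10, mul_zero, Real.sin_zero, h, hll, hsbl2,
        Real.sin_pi]
      ring
    · have hy : l * Int.fract (x / l) = x := hfr_self x (le_trans hl10.le hx.1) h
      simp only [hg]
      rw [hef x, hy, if_neg (not_lt.mpr hx.1)]
      ring
  have hv2 : ∫ x in l1..l, ((sa/sb) * Real.sin (sb * (x - l1)))^2
      = (sa/sb)^2 * (π / (2 * sb)) := by
    simp only [mul_pow]
    rw [intervalIntegral.integral_const_mul]
    congr 1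
    rw [intervalIntegral.integral_comp_sub_right (fun u => Real.sin (sb * u) ^ 2) l1]
    have hll : l - l1 = l2 := by rw [hldef]; ring
    rw [sub_self, hll]
    rw [intervalIntegral.integral_comp_mul_left (fun u => Real.sin u ^ 2) hsb0.ne']
    rw [mul_zero, hsbl2, integral_sin_sq]
    have h0 : (Real.sin 0 * Real.cos 0 - Real.sin π * Real.cos π + π - 0) / 2 = π / 2 := by
      simp
    rw [h0, smul_eq_mul, inv_mul_eq_div, div_div]
  -- key algebraic relation
  have hkey : sa * (2 * sb - (n:ℝ)) = n * sb := by
    field_simp at hcurve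
    nlinarith [hcurve, hπ, hsa0, hsb0]
  have h2sb : (0:ℝ) < 2 * sb - n := by linarith
  have hsa_eq : sa = (n:ℝ) * sb / (2 * sb - n) := by
    rw [eq_div_iff h2sb.ne']
    linarith [hkey]
  -- finish
  rw [step0, step1, hsplit, hI1, hv1, hI2, hv2]
  clear hef hper habs hint hfr_self hπeq step0 step1 hsplit hI1 hv1 hI2 hv2 hcurve
    hsal1 hsbl2 hkey hl1l hl0 hl20 hl10 hg g
  clear_value l l2 l1 sb sa
  have hm0 : (0:ℝ) < (m:ℝ) := by
    have : 1 ≤ m := by omega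
    exact_mod_cast Nat.lt_of_lt_of_le Nat.zero_lt_one this
  rw [hsa_eq, hm2]
  rw [hm2] at h2sb
  have h2sb' : (2 * sb - 2 * (m:ℝ)) ≠ 0 := ne_of_gt h2sb
  have hsm : sb - (m:ℝ) ≠ 0 := by intro h; apply h2sb'; linarith
  field_simp
  ring
end

section
/- Let n ≥ 3 be odd and (α,β) ∈ Γ_n with β > n² > α. Then ‖f^n_{α,β}‖² = π/2 − π·(n−1)·(√β + 1)·(√β − n)/(√β·(2√β − (n−1))²). -/
open MeasureTheory Real Set Filter

lemma alg (m : ℕ) (s A : ℝ) (hm1 : 1 ≤ m) (hs : 2*(m:ℝ)+1 < s) (hA : 0 < A)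
    (hrel : A*(s-(m:ℝ)) = ((m:ℝ)+1)*s) :
    (m:ℝ)*(π/(2*A) + A^2*π/(2*s^3)) + π/(2*A)
      = π/2 - π*((2*(m:ℝ)+1)-1)*(s+1)*(s-(2*(m:ℝ)+1))/(s*(2*s-((2*(m:ℝ)+1)-1))^2) := by
  have hm0 : (0:ℝ) ≤ (m:ℝ) := Nat.cast_nonneg m
  have hs0 : (0:ℝ) < s := by linarith
  have hsm : (0:ℝ) < s - (m:ℝ) := by linarith
  have hAeq : A = ((m:ℝ)+1)*s/(s-(m:ℝ)) := by
    field_simp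
    linarith [hrel]
  rw [hAeq]
  have h1 : s - (m:ℝ) ≠ 0 := hsm.ne'
  have h2 : (m:ℝ)+1 ≠ 0 := by positivity
  have h3 : 2*s - (2*(m:ℝ)+1-1) ≠ 0 := by intro h; apply h1; linarith
  have h4 : s ≠ 0 := hs0.ne'
  rw [show 2*(m:ℝ)+1-1 = 2*(m:ℝ) by ring] at h3 ⊢
  field_simp
  ring


theorem fucik_normSq_odd_b_gt (n : ℕ) (hn : 3 ≤ n) (hno : Odd n) (a b : ℝ)
    (hΓ : FucikCurve n a b) (hb : (n:ℝ)^2 < b) (ha : a < (n:ℝ)^2) :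
    L2normSq (fucikEf n a b)
      = π/2 - π*((n:ℝ)-1)*(Real.sqrt b + 1)*(Real.sqrt b - (n:ℝ))
          /(Real.sqrt b*(2*Real.sqrt b - ((n:ℝ)-1))^2) := by
  obtain ⟨ha1, hb1, hcurve⟩ := hΓ
  rw [if_neg (Nat.not_even_iff_odd.mpr hno)] at hcurve
  obtain ⟨m, hm⟩ := hno
  have hm1 : 1 ≤ m := by omega
  have hn1 : n ≠ 1 := by omega
  have ha0 : (0:ℝ) < a := by linarith
  have hb0 : (0:ℝ) < b := by linarith
  set A := Real.sqrt a with hAdef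
  set s := Real.sqrt b with hsdef
  have hA1 : 1 < A := by
    rw [hAdef]; exact (Real.lt_sqrt (by norm_num)).mpr (by norm_num; linarith)
  have hs1 : (n:ℝ) < s := by
    rw [hsdef]; exact (Real.lt_sqrt (by positivity)).mpr hb
  have hncast : (n:ℝ) = 2*(m:ℝ)+1 := by rw [hm]; push_cast; ring
  have hA0 : 0 < A := by linarith
  have hs0 : 0 < s := by linarith
  set l1 := π / A with hl1def
  set l2 := π / s with hl2def
  set l := l1 + l2 with hldef
  have hl1 : 0 < l1 := div_pos Real.pi_pos hA0
  have hl2 : 0 < l2 := div_pos Real.pi_pos hs0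
  have hl0 : 0 < l := by rw [hldef]; linarith
  have hAl1 : A * l1 = π := by rw [hl1def]; field_simp
  have hsl2 : s * l2 = π := by rw [hl2def]; field_simp
  have hcurve' : ((m:ℝ)+1)*l1 + (m:ℝ)*l2 = π := by
    rw [hncast] at hcurve; linarith
  have hml : (m:ℝ) * l + l1 = π := by rw [hldef]; linarith
  -- fract computation
  have hy : ∀ (k : ℕ) (x : ℝ), (k:ℝ)*l ≤ x → x < ((k:ℝ)+1)*l →
      l * Int.fract (x/l) = x - (k:ℝ)*l := by
    intro k x h1 h2
    have h4 : Int.fract (x/l - (k:ℝ)) = x/l - (k:ℝ) := by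
      rw [Int.fract_eq_self]
      constructor
      · rw [sub_nonneg, le_div_iff₀ hl0]; linarith
      · have : x/l < (k:ℝ)+1 := (div_lt_iff₀ hl0).mpr (by linarith)
        linarith
    have h3 : Int.fract (x/l) = x/l - (k:ℝ) := by
      calc Int.fract (x/l) = Int.fract (x/l - (k:ℝ) + ((k:ℤ):ℝ)) := by
            congr 1; push_cast; ring
        _ = x/l - (k:ℝ) := by rw [Int.fract_add_intCast, h4]
    rw [h3]; field_simp
  -- pointwise values
  have hval1 : ∀ (k : ℕ) (x : ℝ), (k:ℝ)*l ≤ x → x ≤ (k:ℝ)*l + l1 →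
      fucikEf n a b x = Real.sin (A*(x - (k:ℝ)*l)) := by
    intro k x h1 h2
    have hlt : (k:ℝ)*l + l1 < ((k:ℝ)+1)*l := by
      have e : ((k:ℝ)+1)*l = (k:ℝ)*l + l1 + l2 := by rw [hldef]; ring
      linarith
    simp only [fucikEf, if_neg hn1, if_neg (not_le.mpr ha)]
    rw [← hAdef, ← hsdef, ← hl1def, ← hl2def, ← hldef]
    rcases lt_or_eq_of_le h2 with h2' | h2'
    · rw [hy k x h1 (by linarith), if_pos (by linarith)]
    · have hfr : l * Int.fract (x/l) = l1 := by
        rw [hy k x h1 (by linarith), h2']; ring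
      rw [hfr, if_neg (lt_irrefl l1), h2']
      rw [show A * ((k:ℝ)*l + l1 - (k:ℝ)*l) = π by rw [← hAl1]; ring, Real.sin_pi]
      simp
  have hval2 : ∀ (k : ℕ) (x : ℝ), (k:ℝ)*l + l1 ≤ x → x ≤ ((k:ℝ)+1)*l →
      fucikEf n a b x = -(A/s) * Real.sin (s*(x - ((k:ℝ)*l + l1))) := by
    intro k x h1 h2
    simp only [fucikEf, if_neg hn1, if_neg (not_le.mpr ha)]
    rw [← hAdef, ← hsdef, ← hl1def, ← hl2def, ← hldef]
    rcases lt_or_eq_of_le h2 with h2' | h2'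
    · rw [hy k x (by linarith) h2', if_neg (by push_neg; linarith)]
      rw [show x - (k:ℝ)*l - l1 = x - ((k:ℝ)*l + l1) from by ring]
    · have hfr : l * Int.fract (x/l) = 0 := by
        have e1 : x/l = (((k:ℤ)+1:ℤ):ℝ) := by
          rw [h2']; push_cast; field_simp; try ring
        rw [e1, Int.fract_intCast]; ring
      rw [hfr, if_pos (by linarith), h2']
      rw [show s * (((k:ℝ)+1)*l - ((k:ℝ)*l + l1)) = π by rw [← hsl2, hldef]; ring,
        Real.sin_pi]
      simp
  set F := fun x => (fucikEf n a b x)^2 with hFdef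
  -- first-type interval
  have hI1 : ∀ k : ℕ, IntervalIntegrable F volume ((k:ℝ)*l) ((k:ℝ)*l+l1) ∧
      ∫ x in ((k:ℝ)*l)..((k:ℝ)*l+l1), F x = π/(2*A) := by
    intro k
    have hle : (k:ℝ)*l ≤ (k:ℝ)*l + l1 := by linarith
    have hcont : Continuous (fun x => Real.sin (A*(x - (k:ℝ)*l))^2) := by
      have h : Continuous fun x : ℝ => A*(x - (k:ℝ)*l) := by fun_prop
      exact (Real.continuous_sin.comp h).pow 2
    have heq : EqOn (fun x => Real.sin (A*(x - (k:ℝ)*l))^2) F (Icc ((k:ℝ)*l) ((k:ℝ)*l+l1)) := by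
      intro x hx
      simp only [hFdef]
      rw [hval1 k x hx.1 hx.2]
    have hintg : IntervalIntegrable F volume ((k:ℝ)*l) ((k:ℝ)*l+l1) := by
      rw [intervalIntegrable_iff]
      refine IntegrableOn.congr_fun ?_ (heq.mono ?_) measurableSet_uIoc
      · exact hcont.integrableOn_uIoc
      · rw [uIoc_of_le hle]; exact Ioc_subset_Icc_self
    refine ⟨hintg, ?_⟩
    rw [intervalIntegral.integral_congr (g := fun x => Real.sin (A*(x - (k:ℝ)*l))^2)
      (by rw [uIcc_of_le hle]; exact heq.symm)]
    rw [intervalIntegral.integral_comp_sub_right (fun y => Real.sin (A*y)^2) ((k:ℝ)*l)]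
    rw [show (k:ℝ)*l - (k:ℝ)*l = 0 by ring, show (k:ℝ)*l + l1 - (k:ℝ)*l = l1 by ring]
    rw [intervalIntegral.integral_comp_mul_left (fun y => Real.sin y^2) hA0.ne']
    rw [mul_zero, hAl1, integral_sin_sq]
    rw [show (Real.sin 0 * Real.cos 0 - Real.sin π * Real.cos π + π - 0)/2 = π/2 by
      rw [Real.sin_zero, Real.sin_pi]; ring]
    rw [smul_eq_mul, inv_mul_eq_div, div_div]
  -- second-type interval
  have hI2 : ∀ k : ℕ, IntervalIntegrable F volume ((k:ℝ)*l+l1) (((k:ℝ)+1)*l) ∧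
      ∫ x in ((k:ℝ)*l+l1)..(((k:ℝ)+1)*l), F x = A^2*π/(2*s^3) := by
    intro k
    have hle : (k:ℝ)*l + l1 ≤ ((k:ℝ)+1)*l := by
      have e : ((k:ℝ)+1)*l = (k:ℝ)*l + l1 + l2 := by rw [hldef]; ring
      linarith
    have hcont : Continuous (fun x => (A/s)^2 * Real.sin (s*(x - ((k:ℝ)*l+l1)))^2) := by
      have h : Continuous fun x : ℝ => s*(x - ((k:ℝ)*l+l1)) := by fun_prop
      exact continuous_const.mul ((Real.continuous_sin.comp h).pow 2)
    have heq : EqOn (fun x => (A/s)^2 * Real.sin (s*(x - ((k:ℝ)*l+l1)))^2) F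
        (Icc ((k:ℝ)*l+l1) (((k:ℝ)+1)*l)) := by
      intro x hx
      simp only [hFdef]
      rw [hval2 k x hx.1 hx.2]
      ring
    have hintg : IntervalIntegrable F volume ((k:ℝ)*l+l1) (((k:ℝ)+1)*l) := by
      rw [intervalIntegrable_iff]
      refine IntegrableOn.congr_fun ?_ (heq.mono ?_) measurableSet_uIoc
      · exact hcont.integrableOn_uIoc
      · rw [uIoc_of_le hle]; exact Ioc_subset_Icc_self
    refine ⟨hintg, ?_⟩
    rw [intervalIntegral.integral_congr (g := fun x => (A/s)^2 * Real.sin (s*(x - ((k:ℝ)*l+l1)))^2)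
      (by rw [uIcc_of_le hle]; exact heq.symm)]
    rw [intervalIntegral.integral_const_mul]
    rw [intervalIntegral.integral_comp_sub_right (fun y => Real.sin (s*y)^2) ((k:ℝ)*l+l1)]
    rw [show (k:ℝ)*l + l1 - ((k:ℝ)*l+l1) = 0 by ring,
        show ((k:ℝ)+1)*l - ((k:ℝ)*l+l1) = l2 by rw [hldef]; ring]
    rw [intervalIntegral.integral_comp_mul_left (fun y => Real.sin y^2) hs0.ne']
    rw [mul_zero, hsl2, integral_sin_sq]
    rw [show (Real.sin 0 * Real.cos 0 - Real.sin π * Real.cos π + π - 0)/2 = π/2 by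
      rw [Real.sin_zero, Real.sin_pi]; ring]
    rw [smul_eq_mul, inv_mul_eq_div, div_div, div_pow, div_mul_div_comm]
    rw [show s^2*(2*s) = 2*s^3 by ring]
  -- induction over full periods
  have hper : ∀ j : ℕ, IntervalIntegrable F volume 0 ((j:ℝ)*l) ∧
      ∫ x in (0:ℝ)..((j:ℝ)*l), F x = (j:ℝ) * (π/(2*A) + A^2*π/(2*s^3)) := by
    intro j
    induction j with
    | zero =>
      constructor
      · simp [intervalIntegrable_iff]
      · simp
    | succ j ih =>
      obtain ⟨ihI, ihv⟩ := ih
      obtain ⟨h1I, h1v⟩ := hI1 j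
      obtain ⟨h2I, h2v⟩ := hI2 j
      have hIseg : IntervalIntegrable F volume ((j:ℝ)*l) (((j:ℝ)+1)*l) := h1I.trans h2I
      have hvseg : ∫ x in ((j:ℝ)*l)..(((j:ℝ)+1)*l), F x = π/(2*A) + A^2*π/(2*s^3) := by
        rw [← intervalIntegral.integral_add_adjacent_intervals h1I h2I, h1v, h2v]
      have hcastj : ((j+1 : ℕ):ℝ) = (j:ℝ)+1 := by push_cast; ring
      constructor
      · rw [hcastj]; exact ihI.trans hIseg
      · rw [hcastj, ← intervalIntegral.integral_add_adjacent_intervals ihI hIseg, ihv, hvseg]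
        ring
  -- total
  have htotal : L2normSq (fucikEf n a b)
      = (m:ℝ)*(π/(2*A) + A^2*π/(2*s^3)) + π/(2*A) := by
    obtain ⟨hIm, hvm⟩ := hper m
    obtain ⟨h1I, h1v⟩ := hI1 m
    have : L2normSq (fucikEf n a b) = ∫ x in (0:ℝ)..π, F x := by
      rw [L2normSq, ← MeasureTheory.integral_Ioc_eq_integral_Ioo,
        ← intervalIntegral.integral_of_le Real.pi_pos.le]
    rw [this]
    rw [show (∫ x in (0:ℝ)..π, F x) = ∫ x in (0:ℝ)..((m:ℝ)*l+l1), F x by rw [hml]]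
    rw [← intervalIntegral.integral_add_adjacent_intervals hIm h1I, hvm, h1v]
  rw [htotal]
  have hmA : A * (s - (m:ℝ)) = ((m:ℝ)+1) * s := by
    have h := hcurve'
    rw [hl1def, hl2def] at h
    have h2 : ((m:ℝ)+1) * π * s + (m:ℝ) * π * A = π * (A * s) := by
      have := congrArg (fun t => t * (A * s)) h
      field_simp at this
      linear_combination π * this
    have hπ : π ≠ 0 := Real.pi_pos.ne'
    have h3 : ((m:ℝ)+1) * s + (m:ℝ) * A = A * s := by
      apply mul_left_cancel₀ hπ
      ring_nf
      ring_nf at h2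
      linarith [h2]
    linarith [h3]
  rw [hncast]
  exact alg m s A hm1 (by rw [hncast] at hs1; exact hs1) hA0 hmA
end

section
/- Let n ≥ 2 be even and (α,β) ∈ Γ_n with α > n² > β. Then ‖f^n_{α,β} − φ_n‖² = π − π·n·(√α − n)/(2√α − n)² − (4α²/((2√α − n)(3√α − n)(√α + n)))·sin(nπ/√α)/(√α − n). -/
open MeasureTheory Real Set Filter

lemma key_sq (A p q : ℝ) :
    (A * Real.sin p - Real.sin q)^2
      = A^2/2 - A^2 * Real.cos (2*p)/2 + 1/2 - Real.cos (2*q)/2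
        - A * (Real.cos (p - q) - Real.cos (p + q)) := by
  have hp := Real.sin_sq_add_cos_sq p
  have hq := Real.sin_sq_add_cos_sq q
  rw [Real.cos_two_mul, Real.cos_two_mul, Real.cos_sub, Real.cos_add]
  linear_combination A^2 * hp + hq

noncomputable def Hfun (A c d e : ℝ) (x : ℝ) : ℝ :=
  A^2*x/2 - A^2 * Real.sin (2*c*x + 2*d)/(4*c) + x/2 - Real.sin (2*e*x)/(4*e)
    - A * (Real.sin ((c-e)*x + d)/(c-e) - Real.sin ((c+e)*x + d)/(c+e))

lemma hasDerivAt_lin_sin (k d' x : ℝ) :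
    HasDerivAt (fun x => Real.sin (k*x + d')) (Real.cos (k*x + d') * k) x := by
  have h : HasDerivAt (fun x : ℝ => k*x + d') k x := by
    simpa using ((hasDerivAt_id x).const_mul k).add_const d'
  exact (Real.hasDerivAt_sin _).comp x h

lemma hasDerivAt_Hfun (A c d e : ℝ) (hc : c ≠ 0) (he : e ≠ 0)
    (h1 : c - e ≠ 0) (h2 : c + e ≠ 0) (x : ℝ) :
    HasDerivAt (Hfun A c d e) ((A * Real.sin (c*x + d) - Real.sin (e*x))^2) x := by
  have t1 : HasDerivAt (fun x : ℝ => A^2*x/2) (A^2/2) x := by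
    simpa using (((hasDerivAt_id x).const_mul (A^2)).div_const 2)
  have t2 : HasDerivAt (fun x => A^2 * Real.sin (2*c*x + 2*d)/(4*c))
      (A^2 * (Real.cos (2*c*x + 2*d) * (2*c))/(4*c)) x := by
    simpa [mul_comm, mul_assoc, mul_left_comm] using
      (((hasDerivAt_lin_sin (2*c) (2*d) x).const_mul (A^2)).div_const (4*c))
  have t3 : HasDerivAt (fun x : ℝ => x/2) (1/2 : ℝ) x := by
    simpa using (hasDerivAt_id x).div_const 2
  have t4 : HasDerivAt (fun x => Real.sin (2*e*x)/(4*e))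
      (Real.cos (2*e*x) * (2*e)/(4*e)) x := by
    have := (hasDerivAt_lin_sin (2*e) 0 x).div_const (4*e)
    simpa using this
  have t5 : HasDerivAt (fun x => A * (Real.sin ((c-e)*x + d)/(c-e) - Real.sin ((c+e)*x + d)/(c+e)))
      (A * (Real.cos ((c-e)*x + d) * (c-e)/(c-e) - Real.cos ((c+e)*x + d) * (c+e)/(c+e))) x := by
    exact (((hasDerivAt_lin_sin (c-e) d x).div_const (c-e)).sub
      ((hasDerivAt_lin_sin (c+e) d x).div_const (c+e))).const_mul A
  have H := (((t1.sub t2).add t3).sub t4).sub t5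
  refine H.congr_deriv ?_
  rw [key_sq]
  have e1 : 2*(c*x+d) = 2*c*x + 2*d := by ring
  have e2 : c*x+d - e*x = (c-e)*x + d := by ring
  have e3 : c*x+d + e*x = (c+e)*x + d := by ring
  have e4 : 2*(e*x) = 2*e*x := by ring
  rw [e1, e2, e3, e4]
  field_simp
  ring

lemma integral_piece (A c d e u v : ℝ) (hc : c ≠ 0) (he : e ≠ 0)
    (h1 : c - e ≠ 0) (h2 : c + e ≠ 0) :
    ∫ x in u..v, (A * Real.sin (c*x + d) - Real.sin (e*x))^2
      = Hfun A c d e v - Hfun A c d e u := by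
  apply intervalIntegral.integral_eq_sub_of_hasDerivAt
    (fun x _ => hasDerivAt_Hfun A c d e hc he h1 h2 x)
  apply Continuous.intervalIntegrable
  fun_prop

set_option maxHeartbeats 2000000 in
theorem fucik_distSq_even_a_gt (n : ℕ) (hn : 2 ≤ n) (hne : Even n) (a b : ℝ)
    (hΓ : FucikCurve n a b) (ha : (n:ℝ)^2 < a) (hb : b < (n:ℝ)^2) :
    L2normSq (fun x => fucikEf n a b x - Real.sin ((n:ℝ)*x))
      = π - π*(n:ℝ)*(Real.sqrt a - (n:ℝ))/(2*Real.sqrt a - (n:ℝ))^2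
        - (4*a^2/((2*Real.sqrt a - (n:ℝ))*(3*Real.sqrt a - (n:ℝ))*(Real.sqrt a + (n:ℝ))))
          * (Real.sin ((n:ℝ)*π/Real.sqrt a)/(Real.sqrt a - (n:ℝ))) := by
  have hn1 : n ≠ 1 := by omega
  have ha0 : (0:ℝ) < a := lt_trans (by positivity) ha
  have hb0 : (0:ℝ) < b := lt_trans one_pos hΓ.2.1
  set s := Real.sqrt a with hs
  set t := Real.sqrt b with ht
  have hnR : (2:ℝ) ≤ (n:ℝ) := by exact_mod_cast hn
  have hsn : (n:ℝ) < s := (Real.lt_sqrt (by positivity)).mpr ha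
  have htn : t < (n:ℝ) := (Real.sqrt_lt' (by positivity)).mpr hb
  have ht1 : (1:ℝ) < t := by
    rw [ht, show (1:ℝ) = Real.sqrt 1 by simp]
    exact Real.sqrt_lt_sqrt (by norm_num) hΓ.2.1
  have hs0 : (0:ℝ) < s := by linarith
  have ht0 : (0:ℝ) < t := by linarith
  have hcurve : (n:ℝ)/2 * (π/s) + (n:ℝ)/2 * (π/t) = π := by
    have h := hΓ.2.2; rw [if_pos hne] at h; exact h
  have h2sn : (0:ℝ) < 2*s - n := by linarith
  have h3sn : (0:ℝ) < 3*s - n := by linarith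
  have hπ := Real.pi_pos
  have ht_eq : t = (n:ℝ)*s/(2*s - (n:ℝ)) := by
    field_simp at hcurve
    rw [eq_div_iff (by linarith)]
    nlinarith [hcurve]
  set l1 := π/s with hl1
  set l2 := π/t with hl2
  set l := l1 + l2 with hl
  have hl1pos : 0 < l1 := by positivity
  have hl2pos : 0 < l2 := by positivity
  have hlpos : 0 < l := by positivity
  have hlval : l = 2*π/(n:ℝ) := by
    rw [hl, hl1, hl2, ht_eq]
    field_simp
    ring
  have hl1l : l1 < l := by linarith
  have hsl1 : s * l1 = π := by rw [hl1]; field_simp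
  have htl2 : t * l2 = π := by rw [hl2]; field_simp
  have hfract : ∀ x : ℝ, 0 ≤ x → x < l → l * Int.fract (x/l) = x := by
    intro x hx0 hxl
    rw [Int.fract_eq_self.mpr ⟨by positivity, (div_lt_one hlpos).mpr hxl⟩]
    field_simp
  have hfe : ∀ x : ℝ, fucikEf n a b x =
      (if l * Int.fract (x/l) < l1 then (t/s) * Real.sin (s * (l * Int.fract (x/l)))
       else - Real.sin (t * (l * Int.fract (x/l) - l1))) := by
    intro x
    rw [fucikEf]
    rw [if_neg hn1, if_pos ha.le]
  have hEq1 : ∀ x ∈ Icc (0:ℝ) l1, fucikEf n a b x = (t/s) * Real.sin (s*x + 0) := by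
    intro x hx
    rw [hfe, add_zero]
    rcases lt_or_eq_of_le hx.2 with h | h
    · rw [hfract x hx.1 (by linarith), if_pos h]
    · subst h
      rw [hfract _ hx.1 hl1l, if_neg (lt_irrefl _), sub_self, mul_zero, Real.sin_zero,
        hsl1, Real.sin_pi, neg_zero, mul_zero]
  have hEq2 : ∀ x ∈ Icc l1 l, fucikEf n a b x = (-1) * Real.sin (t*x + (-(t*l1))) := by
    intro x hx
    rw [hfe, show t*x + (-(t*l1)) = t*(x - l1) by ring]
    rcases lt_or_eq_of_le hx.2 with h | h
    · rw [hfract x (by linarith [hx.1, hl1pos]) h, if_neg (not_lt.mpr hx.1)]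
      ring
    · subst h
      have : (l/l : ℝ) = 1 := div_self (ne_of_gt hlpos)
      rw [this, Int.fract_one, mul_zero, if_pos hl1pos, mul_zero, Real.sin_zero, mul_zero,
        show t*(l - l1) = t*l2 by rw [hl]; ring, htl2, Real.sin_pi]
      ring
  set G := fun x => (fucikEf n a b x - Real.sin ((n:ℝ)*x))^2 with hG
  have hnne : (n:ℝ) ≠ 0 := by positivity
  have hper : Function.Periodic G l := by
    intro x
    have h1 : fucikEf n a b (x + l) = fucikEf n a b x := by
      rw [hfe, hfe, show (x+l)/l = x/l + 1 by field_simp, Int.fract_add_one]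
    have h2 : Real.sin ((n:ℝ)*(x+l)) = Real.sin ((n:ℝ)*x) := by
      rw [show (n:ℝ)*(x+l) = (n:ℝ)*x + 2*π by rw [hlval]; field_simp,
        Real.sin_add_two_pi]
    simp only [hG, h1, h2]
  -- integrability of G on any interval
  have hmeas : Measurable G := by
    apply Measurable.pow_const
    apply Measurable.sub _ (by fun_prop)
    have : (fucikEf n a b) = fun x =>
        (if l * Int.fract (x/l) < l1 then (t/s) * Real.sin (s * (l * Int.fract (x/l)))
         else - Real.sin (t * (l * Int.fract (x/l) - l1))) := funext hfe
    rw [this]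
    have hfm : Measurable fun x : ℝ => l * Int.fract (x/l) :=
      (measurable_fract.comp (measurable_id.div_const l)).const_mul l
    exact Measurable.ite (measurableSet_lt hfm measurable_const)
      ((Real.measurable_sin.comp (hfm.const_mul s)).const_mul (t/s))
      ((Real.measurable_sin.comp ((hfm.sub_const l1).const_mul t)).neg)
  have hbdd : ∀ x, ‖G x‖ ≤ 9 := by
    intro x
    have h1 : |fucikEf n a b x| ≤ 2 := by
      rw [hfe]
      split
      · rw [abs_mul]
        have h3 : |t/s| ≤ 1 := by
          rw [abs_div, abs_of_pos ht0, abs_of_pos hs0, div_le_one hs0]; linarith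
        nlinarith [Real.abs_sin_le_one (s * (l * Int.fract (x/l))), abs_nonneg (t/s),
          abs_nonneg (Real.sin (s * (l * Int.fract (x/l))))]
      · rw [abs_neg]; linarith [Real.abs_sin_le_one (t * (l * Int.fract (x/l) - l1))]
    have h2 := Real.abs_sin_le_one ((n:ℝ)*x)
    have h4 : |fucikEf n a b x - Real.sin ((n:ℝ)*x)| ≤ 3 := by
      calc |fucikEf n a b x - Real.sin ((n:ℝ)*x)| ≤ _ := abs_sub _ _
        _ ≤ 3 := by linarith
    simp only [hG, Real.norm_eq_abs, abs_pow]
    calc |fucikEf n a b x - Real.sin ((n:ℝ)*x)|^2 ≤ 3^2 :=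
          pow_le_pow_left₀ (abs_nonneg _) h4 2
      _ ≤ 9 := by norm_num
  have hint : ∀ t₁ t₂ : ℝ, IntervalIntegrable G MeasureSpace.volume t₁ t₂ := by
    intro t₁ t₂
    rw [intervalIntegrable_iff]
    have hfin : MeasureTheory.volume (Set.uIoc t₁ t₂) ≠ ⊤ :=
      ne_of_lt measure_Ioc_lt_top
    exact Measure.integrableOn_of_bounded hfin
      hmeas.aestronglyMeasurable (Filter.Eventually.of_forall hbdd)
  obtain ⟨m, hm⟩ := hne
  have hmne : (m:ℝ) ≠ 0 := by
    have : 1 ≤ m := by omega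
    positivity
  have hnm : (n:ℝ) = 2*(m:ℝ) := by rw [hm]; push_cast; ring
  have key : L2normSq (fun x => fucikEf n a b x - Real.sin ((n:ℝ)*x))
      = ∫ x in (0:ℝ)..π, G x := by
    rw [L2normSq, ← integral_Ioc_eq_integral_Ioo,
      ← intervalIntegral.integral_of_le hπ.le]
  have h1 : ∫ x in (0:ℝ)..π, G x = (m:ℤ) • ∫ x in (0:ℝ)..l, G x := by
    have h2 := hper.intervalIntegral_add_zsmul_eq (m:ℤ) 0 hint
    rw [zero_add, zero_add] at h2
    rw [← h2]
    congr 1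
    rw [zsmul_eq_mul, hlval, hnm]
    push_cast
    field_simp
  have hIc1 : ∫ x in (0:ℝ)..l1, G x
      = ∫ x in (0:ℝ)..l1, ((t/s) * Real.sin (s*x + 0) - Real.sin ((n:ℝ)*x))^2 := by
    apply intervalIntegral.integral_congr
    intro x hx
    rw [Set.uIcc_of_le hl1pos.le] at hx
    simp only [hG]
    rw [hEq1 x hx]
  have hIc2 : ∫ x in l1..l, G x
      = ∫ x in l1..l, ((-1) * Real.sin (t*x + (-(t*l1))) - Real.sin ((n:ℝ)*x))^2 := by
    apply intervalIntegral.integral_congr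
    intro x hx
    rw [Set.uIcc_of_le hl1l.le] at hx
    simp only [hG]
    rw [hEq2 x hx]
  have hI1 : ∫ x in (0:ℝ)..l1, ((t/s) * Real.sin (s*x + 0) - Real.sin ((n:ℝ)*x))^2
      = Hfun (t/s) s 0 (n:ℝ) l1 - Hfun (t/s) s 0 (n:ℝ) 0 :=
    integral_piece _ _ _ _ _ _ hs0.ne' hnne (by linarith) (by linarith)
  have hI2 : ∫ x in l1..l, ((-1) * Real.sin (t*x + (-(t*l1))) - Real.sin ((n:ℝ)*x))^2
      = Hfun (-1) t (-(t*l1)) (n:ℝ) l - Hfun (-1) t (-(t*l1)) (n:ℝ) l1 :=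
    integral_piece _ _ _ _ _ _ ht0.ne' hnne (by linarith) (by linarith)
  have hH10 : Hfun (t/s) s 0 (n:ℝ) 0 = 0 := by simp [Hfun]
  have hH11 : Hfun (t/s) s 0 (n:ℝ) l1
      = (t/s)^2*l1/2 + l1/2 - Real.sin (2*((n:ℝ)*π/s))/(4*(n:ℝ))
        - (t/s) * (Real.sin ((n:ℝ)*π/s)/(s-(n:ℝ)) - (- Real.sin ((n:ℝ)*π/s))/(s+(n:ℝ))) := by
    rw [Hfun,
      show 2*s*l1 + 2*0 = 2*π by rw [hl1]; field_simp [hs0.ne']; try ring,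
      show 2*(n:ℝ)*l1 = 2*((n:ℝ)*π/s) by rw [hl1]; ring,
      show (s-(n:ℝ))*l1 + 0 = π - (n:ℝ)*π/s by rw [hl1]; field_simp [hs0.ne']; try ring,
      show (s+(n:ℝ))*l1 + 0 = (n:ℝ)*π/s + π by rw [hl1]; field_simp [hs0.ne']; try ring,
      Real.sin_two_pi, Real.sin_pi_sub, Real.sin_add_pi]
    ring
  have hnl : (n:ℝ)*(l1+l2) = 2*π := by
    rw [← hl, hlval]; field_simp
  have hH2l : Hfun (-1) t (-(t*l1)) (n:ℝ) l = l := by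
    rw [Hfun,
      show 2*t*l + 2*(-(t*l1)) = 2*π by rw [hl]; linear_combination 2*htl2,
      show 2*(n:ℝ)*l = 2*π + 2*π by rw [hl]; linear_combination 2*hnl,
      show (t-(n:ℝ))*l + (-(t*l1)) = -π by rw [hl]; linear_combination htl2 - hnl,
      show (t+(n:ℝ))*l + (-(t*l1)) = π + 2*π by rw [hl]; linear_combination htl2 + hnl,
      Real.sin_add_two_pi, Real.sin_add_two_pi, Real.sin_two_pi, Real.sin_neg, Real.sin_pi]
    ring
  have hH2l1 : Hfun (-1) t (-(t*l1)) (n:ℝ) l1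
      = l1 - Real.sin (2*((n:ℝ)*π/s))/(4*(n:ℝ))
        - Real.sin ((n:ℝ)*π/s)/(t-(n:ℝ)) - Real.sin ((n:ℝ)*π/s)/(t+(n:ℝ)) := by
    rw [Hfun,
      show 2*t*l1 + 2*(-(t*l1)) = 0 by ring,
      show 2*(n:ℝ)*l1 = 2*((n:ℝ)*π/s) by rw [hl1]; ring,
      show (t-(n:ℝ))*l1 + (-(t*l1)) = -((n:ℝ)*π/s) by rw [hl1]; ring,
      show (t+(n:ℝ))*l1 + (-(t*l1)) = (n:ℝ)*π/s by rw [hl1]; ring,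
      Real.sin_zero, Real.sin_neg]
    ring
  have ha_eq : a = s^2 := (Real.sq_sqrt ha0.le).symm
  have hsn' : s - (n:ℝ) ≠ 0 := by linarith
  have hsn'' : s + (n:ℝ) ≠ 0 := by linarith
  have htn' : t - (n:ℝ) ≠ 0 := by linarith
  have htn'' : t + (n:ℝ) ≠ 0 := by linarith
  have h2sn' : 2*s - (n:ℝ) ≠ 0 := by linarith
  have h3sn' : 3*s - (n:ℝ) ≠ 0 := by linarith
  have hnsn : (n:ℝ)*(s-(n:ℝ)) ≠ 0 := by positivity
  have hn3sn : (n:ℝ)*(3*s-(n:ℝ)) ≠ 0 := by positivity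
  have hinv1 : Real.sin ((n:ℝ)*π/s)/(t - (n:ℝ))
      = -Real.sin ((n:ℝ)*π/s)*(2*s-(n:ℝ))/((n:ℝ)*(s-(n:ℝ))) := by
    rw [div_eq_div_iff htn' hnsn, ht_eq]
    rw [div_sub' h2sn', mul_div_assoc', eq_div_iff h2sn']
    ring
  have hinv2 : Real.sin ((n:ℝ)*π/s)/(t + (n:ℝ))
      = Real.sin ((n:ℝ)*π/s)*(2*s-(n:ℝ))/((n:ℝ)*(3*s-(n:ℝ))) := by
    rw [div_eq_div_iff htn'' hn3sn, ht_eq]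
    rw [div_add' _ _ _ h2sn', mul_div_assoc', eq_div_iff h2sn']
    ring
  rw [key, h1, zsmul_eq_mul,
    ← intervalIntegral.integral_add_adjacent_intervals (hint 0 l1) (hint l1 l),
    hIc1, hIc2, hI1, hI2, hH10, hH11, hH2l, hH2l1, ha_eq, hinv1, hinv2]
  push_cast
  rw [hl, hl1, hl2, ht_eq, show ((m:ℕ):ℝ) = (n:ℝ)/2 by rw [hnm]; ring]
  field_simp [show s*3 - (n:ℝ) ≠ 0 by linarith, show s*2 - (n:ℝ) ≠ 0 by linarith]
  ring
end

section
/- Let n ≥ 2 be even and (α,β) ∈ Γ_n with β > n² > α. Then ‖f^n_{α,β} − φ_n‖² = π − π·n·(√β − n)/(2√β − n)² − (4β²/((2√β − n)(3√β − n)(√β + n)))·sin(nπ/√β)/(√β − n). -/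
open MeasureTheory Real Set Filter

lemma integral_cos_phase (c d A B : ℝ) (hc : c ≠ 0) :
    ∫ x in A..B, Real.cos (c*x + d) = (Real.sin (c*B + d) - Real.sin (c*A + d))/c := by
  have h : ∀ x ∈ Set.uIcc A B, HasDerivAt (fun y => Real.sin (c*y + d)/c) (Real.cos (c*x+d)) x := by
    intro x _
    have h1 : HasDerivAt (fun y : ℝ => c*y + d) c x := by
      simpa using ((hasDerivAt_id x).const_mul c).add_const d
    have h3 := ((Real.hasDerivAt_sin (c*x+d)).comp x h1).div_const c
    rw [mul_div_cancel_right₀ _ hc] at h3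
    exact h3
  rw [intervalIntegral.integral_eq_sub_of_hasDerivAt h
    ((Real.continuous_cos.comp (by continuity)).intervalIntegrable A B)]
  ring

lemma integral_master (u p d v q A B : ℝ) (hp : p ≠ 0) (hq : q ≠ 0)
    (h1 : p - q ≠ 0) (h2 : p + q ≠ 0) :
    ∫ x in A..B, (u * Real.sin (p*x + d) + v * Real.sin (q*x))^2
      = u^2 * ((B - A)/2 - (Real.sin (2*p*B + 2*d) - Real.sin (2*p*A + 2*d))/(4*p))
      + v^2 * ((B - A)/2 - (Real.sin (2*q*B) - Real.sin (2*q*A))/(4*q))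
      + u*v*((Real.sin ((p-q)*B + d) - Real.sin ((p-q)*A + d))/(p-q)
           - (Real.sin ((p+q)*B + d) - Real.sin ((p+q)*A + d))/(p+q)) := by
  have e : ∀ a b : ℝ, Real.sin a * Real.sin b = (Real.cos (a - b) - Real.cos (a+b))/2 := by
    intro a b; rw [Real.cos_sub, Real.cos_add]; ring
  have key : ∀ x : ℝ, (u * Real.sin (p*x + d) + v * Real.sin (q*x))^2
      = (u^2/2 + v^2/2)
      + ((-(u^2/2)) * Real.cos ((2*p)*x + 2*d)
      + ((-(v^2/2)) * Real.cos ((2*q)*x + 0)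
      + ((u*v) * Real.cos ((p-q)*x + d)
      + (-(u*v)) * Real.cos ((p+q)*x + d)))) := by
    intro x
    have s1 := e (p*x+d) (p*x+d)
    have s2 := e (q*x) (q*x)
    have s3 := e (p*x+d) (q*x)
    rw [sub_self, Real.cos_zero] at s1 s2
    rw [show (p*x+d) + (p*x+d) = (2*p)*x + 2*d by ring] at s1
    rw [show (q*x) + (q*x) = (2*q)*x + 0 by ring] at s2
    rw [show (p*x+d) - q*x = (p-q)*x + d by ring,
        show (p*x+d) + q*x = (p+q)*x + d by ring] at s3
    linear_combination u^2*s1 + v^2*s2 + 2*u*v*s3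
  simp only [key]
  have ic : ∀ k e c : ℝ, IntervalIntegrable (fun x => c * Real.cos (k*x + e)) volume A B := by
    intro k e c
    exact (Continuous.intervalIntegrable (by continuity) A B)
  rw [intervalIntegral.integral_add intervalIntegrable_const
      (((ic _ _ _).add ((ic _ _ _).add ((ic _ _ _).add (ic _ _ _)))))]
  rw [intervalIntegral.integral_add (ic _ _ _) (((ic _ _ _).add ((ic _ _ _).add (ic _ _ _))))]
  rw [intervalIntegral.integral_add (ic _ _ _) (((ic _ _ _).add (ic _ _ _)))]
  rw [intervalIntegral.integral_add (ic _ _ _) (ic _ _ _)]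
  simp only [intervalIntegral.integral_const_mul]
  rw [integral_cos_phase _ _ _ _ (by intro h; apply hp; linarith),
      integral_cos_phase _ _ _ _ (by intro h; apply hq; linarith),
      integral_cos_phase _ _ _ _ h1, integral_cos_phase _ _ _ _ h2,
      intervalIntegral.integral_const]
  simp only [add_zero, smul_eq_mul]
  field_simp
  ring

lemma periodic_nat_integral (g : ℝ → ℝ) (T : ℝ) (hg : Function.Periodic g T)
    (hint : IntervalIntegrable g volume 0 T) (m : ℕ) :
    ∫ x in (0:ℝ)..(m*T), g x = m * ∫ x in (0:ℝ)..T, g x := by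
  have hseg : ∀ k : ℕ, IntervalIntegrable g volume (k*T) (k*T+T) := by
    intro k
    have h2 := hint.comp_sub_right ((k:ℝ)*T)
    have h3 : (fun x => g (x - (k:ℝ)*T)) = g := funext fun x => hg.sub_nat_mul_eq k
    rw [h3] at h2
    simpa [add_comm] using h2
  have hacc : ∀ k : ℕ, IntervalIntegrable g volume 0 (k*T) := by
    intro k; induction k with
    | zero => simp
    | succ j ih =>
        have := ih.trans (hseg j)
        rw [show ((j:ℝ)*T+T) = ((j+1:ℕ):ℝ)*T by push_cast; ring] at this
        exact this
  induction m with
  | zero => simp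
  | succ k ih =>
      rw [show (((k+1:ℕ)):ℝ)*T = (k:ℝ)*T + T by push_cast; ring,
        ← intervalIntegral.integral_add_adjacent_intervals (hacc k) (hseg k), ih,
        hg.intervalIntegral_add_eq ((k:ℝ)*T) 0]
      push_cast
      ring

lemma one_period (nr σ s l1 l2 : ℝ) (hσ0 : 0 < σ) (hs0 : 0 < s) (hn0 : 0 < nr)
    (hσn : σ < nr) (hsn : nr < s)
    (hσl1 : σ * l1 = π) (hsl2 : s * l2 = π) (hnl : nr * (l1 + l2) = 2*π) :
    (∫ x in (0:ℝ)..l1, (Real.sin (σ*x) - Real.sin (nr*x))^2)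
    + ∫ x in l1..(l1+l2), (-(σ/s) * Real.sin (s*(x-l1)) - Real.sin (nr*x))^2
    = l1 + l2/2*(1+σ^2/s^2)
      + 2*Real.sin (nr*π/s)*σ*(1/(σ^2-nr^2) - 1/(s^2-nr^2)) := by
  have hθ : nr * l1 = 2*π - nr*π/s := by
    have hl2v : l2 = π / s := by field_simp at hsl2 ⊢; linarith [hsl2]
    rw [hl2v] at hnl
    field_simp at hnl ⊢
    linarith [hnl]
  have e1 : ∀ x : ℝ, (Real.sin (σ*x) - Real.sin (nr*x))^2
      = (1 * Real.sin (σ*x + 0) + (-1) * Real.sin (nr*x))^2 := by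
    intro x; rw [add_zero]; ring
  have e2 : ∀ x : ℝ, (-(σ/s) * Real.sin (s*(x-l1)) - Real.sin (nr*x))^2
      = ((-(σ/s)) * Real.sin (s*x + -(s*l1)) + (-1) * Real.sin (nr*x))^2 := by
    intro x; rw [show s*x + -(s*l1) = s*(x-l1) by ring]; ring
  simp only [e1, e2]
  rw [integral_master 1 σ 0 (-1) nr 0 l1 hσ0.ne' hn0.ne'
      (by intro h; linarith) (by positivity),
     integral_master (-(σ/s)) s (-(s*l1)) (-1) nr l1 (l1+l2) hs0.ne' hn0.ne'
      (by intro h; linarith) (by positivity)]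
  rw [show 2*σ*l1 + 2*0 = 2*π by linear_combination 2*hσl1,
      show 2*σ*0 + 2*0 = (0:ℝ) by ring,
      show 2*nr*l1 = -(2*(nr*π/s)) + 2*π + 2*π by linear_combination 2*hθ,
      show 2*nr*0 = (0:ℝ) by ring,
      show (σ-nr)*l1 + 0 = -(π - nr*π/s) by linear_combination hσl1 - hθ,
      show (σ-nr)*0 + 0 = (0:ℝ) by ring,
      show (σ+nr)*l1 + 0 = (π - nr*π/s) + 2*π by linear_combination hσl1 + hθ,
      show (σ+nr)*0 + 0 = (0:ℝ) by ring,
      show 2*s*(l1+l2) + 2*(-(s*l1)) = 2*π by linear_combination 2*hsl2,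
      show 2*s*l1 + 2*(-(s*l1)) = (0:ℝ) by ring,
      show 2*nr*(l1+l2) = 0 + 2*π + 2*π by linear_combination 2*hnl,
      show (s-nr)*(l1+l2) + -(s*l1) = -π by linear_combination hsl2 - hnl,
      show (s-nr)*l1 + -(s*l1) = -(-(nr*π/s) + 2*π) by linear_combination -hθ,
      show (s+nr)*(l1+l2) + -(s*l1) = π + 2*π by linear_combination hsl2 + hnl,
      show (s+nr)*l1 + -(s*l1) = -(nr*π/s) + 2*π by linear_combination hθ]
  simp only [Real.sin_add_two_pi, Real.sin_two_pi, Real.sin_zero, Real.sin_neg,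
    Real.sin_pi_sub, Real.sin_pi, Real.sin_two_mul, neg_neg, neg_zero]
  have h1 : σ - nr ≠ 0 := by intro h; linarith
  have h2 : σ + nr ≠ 0 := by positivity
  have h3 : s - nr ≠ 0 := by intro h; linarith
  have h4 : s + nr ≠ 0 := by positivity
  have h5 : σ^2 - nr^2 ≠ 0 := by
    intro h; apply h1; nlinarith [sq_nonneg (σ+nr)]
  have h6 : s^2 - nr^2 ≠ 0 := by
    intro h; apply h3; nlinarith [sq_nonneg (s+nr)]
  field_simp
  ring

lemma fucikEf_eval (n : ℕ) (hn1 : n ≠ 1) (a b x : ℝ)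
    (ha0 : 0 < Real.sqrt a) (hb0 : 0 < Real.sqrt b) (hna : ¬((n:ℝ)^2 ≤ a))
    (hx0 : 0 ≤ x) (hxl : x < π / Real.sqrt a + π / Real.sqrt b) :
    fucikEf n a b x = if x < π / Real.sqrt a then Real.sin (Real.sqrt a * x)
      else -(Real.sqrt a / Real.sqrt b) * Real.sin (Real.sqrt b * (x - π / Real.sqrt a)) := by
  have hl : 0 < π / Real.sqrt a + π / Real.sqrt b := by positivity
  have hfr : Int.fract (x / (π / Real.sqrt a + π / Real.sqrt b))
      = x / (π / Real.sqrt a + π / Real.sqrt b) := by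
    rw [Int.fract_eq_self]
    constructor
    · positivity
    · rw [div_lt_one hl]; exact hxl
  have hy : (π / Real.sqrt a + π / Real.sqrt b)
      * Int.fract (x / (π / Real.sqrt a + π / Real.sqrt b)) = x := by
    rw [hfr]; field_simp
  simp only [fucikEf, if_neg hn1, if_neg hna, hy]

lemma fucikEf_periodic (n : ℕ) (hn1 : n ≠ 1) (a b : ℝ)
    (hl : π / Real.sqrt a + π / Real.sqrt b ≠ 0) :
    Function.Periodic (fucikEf n a b) (π / Real.sqrt a + π / Real.sqrt b) := by
  intro x
  have h : (x + (π / Real.sqrt a + π / Real.sqrt b)) / (π / Real.sqrt a + π / Real.sqrt b)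
      = x / (π / Real.sqrt a + π / Real.sqrt b) + 1 := by rw [add_div, div_self hl]
  simp only [fucikEf, if_neg hn1, h, Int.fract_add_one]

lemma interval_congr_Ioo (g P : ℝ → ℝ) (D E : ℝ) (hDE : D ≤ E) (hP : Continuous P)
    (heq : ∀ x ∈ Ioo D E, g x = P x) :
    IntervalIntegrable g volume D E ∧ ∫ x in D..E, g x = ∫ x in D..E, P x := by
  have hPI : IntegrableOn P (Ioo D E) volume :=
    (hP.intervalIntegrable D E).1.mono_set Ioo_subset_Ioc_self
  have hgI : IntegrableOn g (Ioo D E) volume :=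
    hPI.congr_fun (fun x hx => (heq x hx).symm) measurableSet_Ioo
  constructor
  · rw [intervalIntegrable_iff, uIoc_of_le hDE]
    rw [integrableOn_Ioc_iff_integrableOn_Ioo]
    exact hgI
  · rw [intervalIntegral.integral_of_le hDE, intervalIntegral.integral_of_le hDE,
      MeasureTheory.integral_Ioc_eq_integral_Ioo, MeasureTheory.integral_Ioc_eq_integral_Ioo]
    exact setIntegral_congr_fun measurableSet_Ioo heq


set_option maxHeartbeats 2000000 in
theorem fucik_distSq_even_b_gt (n : ℕ) (hn : 2 ≤ n) (hne : Even n) (a b : ℝ)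
    (hΓ : FucikCurve n a b) (hb : (n:ℝ)^2 < b) (ha : a < (n:ℝ)^2) :
    L2normSq (fun x => fucikEf n a b x - Real.sin ((n:ℝ)*x))
      = π - π*(n:ℝ)*(Real.sqrt b - (n:ℝ))/(2*Real.sqrt b - (n:ℝ))^2
        - (4*b^2/((2*Real.sqrt b - (n:ℝ))*(3*Real.sqrt b - (n:ℝ))*(Real.sqrt b + (n:ℝ))))
          * (Real.sin ((n:ℝ)*π/Real.sqrt b)/(Real.sqrt b - (n:ℝ))) := by
  obtain ⟨ha1, hb1, hcurve⟩ := hΓ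
  rw [if_pos hne] at hcurve
  have hn1 : n ≠ 1 := by omega
  have hn0 : (0:ℝ) < n := by exact_mod_cast (by omega : 0 < n)
  set s := Real.sqrt b with hsd
  set σ := Real.sqrt a with hσd
  have ha0 : (0:ℝ) < a := by linarith
  have hb0 : (0:ℝ) < b := by nlinarith [sq_nonneg ((n:ℝ))]
  have hσ0 : 0 < σ := Real.sqrt_pos.mpr ha0
  have hs0 : 0 < s := Real.sqrt_pos.mpr hb0
  have hσn : σ < (n:ℝ) := by rw [hσd]; exact (Real.sqrt_lt' hn0).mpr ha
  have hsn : (n:ℝ) < s := by rw [hsd]; exact (Real.lt_sqrt hn0.le).mpr hb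
  have hb2 : s^2 = b := by rw [hsd]; exact Real.sq_sqrt hb0.le
  set l1 := π/σ with hl1d
  set l2 := π/s with hl2d
  have hl1p : 0 < l1 := by rw [hl1d]; positivity
  have hl2p : 0 < l2 := by rw [hl2d]; positivity
  have hσl1 : σ * l1 = π := by rw [hl1d]; field_simp
  have hsl2 : s * l2 = π := by rw [hl2d]; field_simp
  have hnl : (n:ℝ) * (l1 + l2) = 2*π := by linear_combination 2*hcurve
  obtain ⟨m, hm⟩ := hne
  have hmr : ((m:ℕ):ℝ) * 2 = (n:ℝ) := by rw [hm]; push_cast; ring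
  have hml : (m:ℝ) * (l1 + l2) = π := by
    have h := hnl
    rw [← hmr] at h
    linarith
  have hlne : l1 + l2 ≠ 0 := by positivity
  have hper : Function.Periodic (fucikEf n a b) (l1 + l2) := by
    have := fucikEf_periodic n hn1 a b (by rw [← hσd, ← hsd, ← hl1d, ← hl2d]; exact hlne)
    rw [← hσd, ← hsd, ← hl1d, ← hl2d] at this
    exact this
  have hgper : Function.Periodic
      (fun x => (fucikEf n a b x - Real.sin ((n:ℝ)*x))^2) (l1+l2) := by
    intro x
    simp only
    rw [hper x, show (n:ℝ)*(x + (l1+l2)) = (n:ℝ)*x + 2*π by linear_combination hnl,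
      Real.sin_add_two_pi]
  have hna : ¬((n:ℝ)^2 ≤ a) := not_le.mpr ha
  have hef : ∀ x ∈ Ioo (0:ℝ) (l1+l2), fucikEf n a b x
      = (if x < l1 then Real.sin (σ*x) else -(σ/s) * Real.sin (s*(x-l1))) := by
    intro x hx
    have h1 : x < π / Real.sqrt a + π / Real.sqrt b := by
      rw [← hσd, ← hsd, ← hl1d, ← hl2d]; exact hx.2
    have h2 := fucikEf_eval n hn1 a b x (by rw [← hσd]; exact hσ0)
      (by rw [← hsd]; exact hs0) hna hx.1.le h1
    rw [← hσd, ← hsd, ← hl1d] at h2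
    exact h2
  have heq1 : ∀ x ∈ Ioo (0:ℝ) l1,
      (fucikEf n a b x - Real.sin ((n:ℝ)*x))^2
        = (Real.sin (σ*x) - Real.sin ((n:ℝ)*x))^2 := by
    intro x hx
    rw [hef x ⟨hx.1, by linarith [hx.2]⟩, if_pos hx.2]
  have heq2 : ∀ x ∈ Ioo l1 (l1+l2),
      (fucikEf n a b x - Real.sin ((n:ℝ)*x))^2
        = (-(σ/s) * Real.sin (s*(x-l1)) - Real.sin ((n:ℝ)*x))^2 := by
    intro x hx
    rw [hef x ⟨by linarith [hx.1], hx.2⟩, if_neg (not_lt.mpr hx.1.le)]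
  obtain ⟨hi1, he1⟩ := interval_congr_Ioo _ _ 0 l1 hl1p.le (by fun_prop) heq1
  obtain ⟨hi2, he2⟩ := interval_congr_Ioo _ _ l1 (l1+l2) (by linarith) (by fun_prop) heq2
  have hi : IntervalIntegrable
      (fun x => (fucikEf n a b x - Real.sin ((n:ℝ)*x))^2) volume 0 (l1+l2) := hi1.trans hi2
  have key : (∫ x in Ioo (0:ℝ) π, (fucikEf n a b x - Real.sin ((n:ℝ)*x))^2)
      = (m:ℝ) * ((∫ x in (0:ℝ)..l1, (Real.sin (σ*x) - Real.sin ((n:ℝ)*x))^2)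
          + ∫ x in l1..(l1+l2), (-(σ/s) * Real.sin (s*(x-l1)) - Real.sin ((n:ℝ)*x))^2) := by
    rw [← MeasureTheory.integral_Ioc_eq_integral_Ioo,
      ← intervalIntegral.integral_of_le Real.pi_pos.le, ← hml,
      periodic_nat_integral _ _ hgper hi m,
      ← intervalIntegral.integral_add_adjacent_intervals hi1 hi2, he1, he2]
  simp only [L2normSq]
  rw [key, one_period ((n:ℝ)) σ s l1 l2 hσ0 hs0 hn0 hσn hsn hσl1 hsl2 hnl]
  -- final algebra
  have hπ : (π:ℝ) ≠ 0 := Real.pi_ne_zero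
  have e : (n:ℝ)*s*π + (n:ℝ)*σ*π = 2*σ*s*π := by
    linear_combination σ*s*hnl - (n:ℝ)*s*hσl1 - (n:ℝ)*σ*hsl2
  have h2s : (0:ℝ) < 2*s - (n:ℝ) := by linarith
  have hσrel : σ * (2*s - (n:ℝ)) = (n:ℝ) * s := by
    apply mul_right_cancel₀ hπ
    linear_combination -e
  have hm2 : (m:ℝ) = (n:ℝ)/2 := by linarith
  have hd1 : σ^2 - (n:ℝ)^2 ≠ 0 := ne_of_lt (by nlinarith)
  have hd2 : s^2 - (n:ℝ)^2 ≠ 0 := by nlinarith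
  have hd3 : s - (n:ℝ) ≠ 0 := by intro h; linarith
  have hd4 : 2*s - (n:ℝ) ≠ 0 := h2s.ne'
  have hd5 : 3*s - (n:ℝ) ≠ 0 := by intro h; linarith
  have hd6 : s + (n:ℝ) ≠ 0 := by positivity
  have hσv : σ = (n:ℝ)*s/(2*s-(n:ℝ)) := by
    rw [eq_div_iff hd4]; exact hσrel
  have hd7 : s*(n:ℝ)*4 - s^2*3 - (n:ℝ)^2 ≠ 0 := by
    have : 0 < (3*s-(n:ℝ))*(s-(n:ℝ)) := mul_pos (by linarith) (by linarith)
    intro h; nlinarith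
  have hd8 : s*3 - (n:ℝ) ≠ 0 := by intro h; linarith
  rw [hl1d, hl2d, hm2, ← hb2]
  field_simp
  rw [hσv]
  field_simp
  ring
end

section
/- Let n ≥ 2 be even and (α,β) ∈ Γ_n. Then ‖f^n_{α,β} − φ_n‖² ≤ (4(3+π²)π/9)·(max(√α, √β)/n − 1)². -/
open MeasureTheory Real Set Filter

section FucikProofAux
set_option maxHeartbeats 1000000
open intervalIntegral


lemma sin_lb {x : ℝ} (hx : 0 ≤ x) : x - x^3/6 ≤ Real.sin x := by
  have hd : ∀ y : ℝ, HasDerivAt (fun t : ℝ => Real.sin t - t + t^3/6)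
      (Real.cos y - 1 + y^2/2) y := by
    intro y
    have h1 : HasDerivAt (fun t : ℝ => Real.sin t) (Real.cos y) y := Real.hasDerivAt_sin y
    have h2 : HasDerivAt (fun t : ℝ => t) 1 y := hasDerivAt_id y
    have h3 : HasDerivAt (fun t : ℝ => t^3/6) (3*y^2/6) y := by
      simpa using ((hasDerivAt_pow 3 y).div_const 6)
    have := (h1.sub h2).add h3
    refine this.congr_deriv (Eq.symm ?_)
    ring
  have mono : MonotoneOn (fun t : ℝ => Real.sin t - t + t^3/6) (Set.Ici 0) := by
    apply monotoneOn_of_deriv_nonneg (convex_Ici 0)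
    · exact (Continuous.continuousOn (by continuity))
    · intro y hy
      exact (hd y).differentiableAt.differentiableWithinAt
    · intro y hy
      rw [(hd y).deriv]
      nlinarith [Real.one_sub_sq_div_two_le_cos (x := y)]
  have h0 : (fun t : ℝ => Real.sin t - t + t^3/6) 0 ≤ (fun t : ℝ => Real.sin t - t + t^3/6) x :=
    mono (Set.self_mem_Ici) hx hx
  simp at h0
  linarith


lemma hasDerivAt_sin_lin (k d x : ℝ) :
    HasDerivAt (fun y : ℝ => Real.sin (k*y + d)) (Real.cos (k*x + d) * k) x := by
  have h1 : HasDerivAt (fun y : ℝ => k*y + d) k x := by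
    simpa using ((hasDerivAt_id x).const_mul k).add_const d
  exact (Real.hasDerivAt_sin (k*x+d)).comp x h1

lemma integral_sq_sin (c s m φ L : ℝ) (hs : s ≠ 0) (hm : m ≠ 0) (h1 : s - m ≠ 0)
    (h2 : s + m ≠ 0) :
    ∫ x in (0:ℝ)..L, (c * Real.sin (s*x) + Real.sin (m*x + φ))^2
      = ((c^2+1)/2*L - c^2/(4*s) * Real.sin (2*s*L + 0)
        - (1/(4*m)) * Real.sin (2*m*L + 2*φ)
        + (c/(s-m)) * Real.sin ((s-m)*L + -φ)
        - (c/(s+m)) * Real.sin ((s+m)*L + φ))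
      - ((c^2+1)/2*0 - c^2/(4*s) * Real.sin (2*s*0 + 0)
        - (1/(4*m)) * Real.sin (2*m*0 + 2*φ)
        + (c/(s-m)) * Real.sin ((s-m)*0 + -φ)
        - (c/(s+m)) * Real.sin ((s+m)*0 + φ)) := by
  have key : ∀ x ∈ Set.uIcc (0:ℝ) L,
      HasDerivAt (fun x : ℝ => (c^2+1)/2*x - c^2/(4*s) * Real.sin (2*s*x + 0)
        - (1/(4*m)) * Real.sin (2*m*x + 2*φ)
        + (c/(s-m)) * Real.sin ((s-m)*x + -φ)
        - (c/(s+m)) * Real.sin ((s+m)*x + φ))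
      ((c * Real.sin (s*x) + Real.sin (m*x + φ))^2) x := by
    intro x _
    have d1 : HasDerivAt (fun y : ℝ => (c^2+1)/2*y) ((c^2+1)/2) x := by
      simpa using (hasDerivAt_id x).const_mul ((c^2+1)/2)
    have d2 := (hasDerivAt_sin_lin (2*s) 0 x).const_mul (c^2/(4*s))
    have d3 := (hasDerivAt_sin_lin (2*m) (2*φ) x).const_mul (1/(4*m))
    have d4 := (hasDerivAt_sin_lin (s-m) (-φ) x).const_mul (c/(s-m))
    have d5 := (hasDerivAt_sin_lin (s+m) φ x).const_mul (c/(s+m))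
    have hD := (((d1.sub d2).sub d3).add d4).sub d5
    refine hD.congr_deriv (Eq.symm ?_)
    have e1 : Real.cos (2*s*x + 0) = Real.cos (s*x) ^ 2 - Real.sin (s*x) ^ 2 := by
      rw [show 2*s*x + 0 = s*x + s*x by ring, Real.cos_add]; ring
    have e2 : Real.cos (2*m*x + 2*φ)
        = Real.cos (m*x+φ) ^ 2 - Real.sin (m*x+φ) ^ 2 := by
      rw [show 2*m*x + 2*φ = (m*x+φ) + (m*x+φ) by ring, Real.cos_add]; ring
    have e3 : Real.cos ((s-m)*x + -φ)
        = Real.cos (s*x) * Real.cos (m*x+φ) + Real.sin (s*x) * Real.sin (m*x+φ) := by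
      rw [show (s-m)*x + -φ = (s*x) - (m*x+φ) by ring, Real.cos_sub]
    have e4 : Real.cos ((s+m)*x + φ)
        = Real.cos (s*x) * Real.cos (m*x+φ) - Real.sin (s*x) * Real.sin (m*x+φ) := by
      rw [show (s+m)*x + φ = (s*x) + (m*x+φ) by ring, Real.cos_add]
    rw [e1, e2, e3, e4]
    have r2 : c^2/(4*s) * ((Real.cos (s*x) ^ 2 - Real.sin (s*x) ^ 2) * (2*s))
        = c^2 * (Real.cos (s*x) ^ 2 - Real.sin (s*x) ^ 2) / 2 := by
      field_simp; ring
    have r3 : 1/(4*m) * ((Real.cos (m*x+φ) ^ 2 - Real.sin (m*x+φ) ^ 2) * (2*m))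
        = (Real.cos (m*x+φ) ^ 2 - Real.sin (m*x+φ) ^ 2) / 2 := by
      field_simp; ring
    have r4 : c/(s-m) * ((Real.cos (s*x) * Real.cos (m*x+φ)
          + Real.sin (s*x) * Real.sin (m*x+φ)) * (s-m))
        = c * (Real.cos (s*x) * Real.cos (m*x+φ) + Real.sin (s*x) * Real.sin (m*x+φ)) := by
      field_simp
    have r5 : c/(s+m) * ((Real.cos (s*x) * Real.cos (m*x+φ)
          - Real.sin (s*x) * Real.sin (m*x+φ)) * (s+m))
        = c * (Real.cos (s*x) * Real.cos (m*x+φ) - Real.sin (s*x) * Real.sin (m*x+φ)) := by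
      field_simp
    rw [r2, r3, r4, r5]
    linear_combination (c^2/2) * Real.sin_sq_add_cos_sq (s*x)
      + ((1:ℝ)/2) * Real.sin_sq_add_cos_sq (m*x+φ)
  have hint : IntervalIntegrable (fun x => (c * Real.sin (s*x) + Real.sin (m*x + φ))^2)
      MeasureTheory.volume 0 L := by
    apply Continuous.intervalIntegrable
    fun_prop
  exact intervalIntegral.integral_eq_sub_of_hasDerivAt key hint

lemma sin_abs_le_one (t : ℝ) : |Real.sin t| ≤ 1 :=
  abs_le.mpr ⟨Real.neg_one_le_sin t, Real.sin_le_one t⟩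

lemma scalar_main {ε : ℝ} (hε : 0 < ε) :
    ((1/(1+2*ε))^2 + 1)*π/(4*(1+ε)) + π*(1+2*ε)/(2*(1+ε))
      - Real.sin (π*ε/(1+ε)) * ((1+ε)/((1+2*ε)*(ε*(2+ε))) + (1+ε)*(1+2*ε)/(ε*(2+3*ε)))
      ≤ 4*(3+π^2)*π/9 * ε^2 := by
  have hθ : 0 ≤ π*ε/(1+ε) := by positivity
  have hsin := sin_lb hθ
  have hC : 0 ≤ (1+ε)/((1+2*ε)*(ε*(2+ε))) + (1+ε)*(1+2*ε)/(ε*(2+3*ε)) := by positivity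
  set θ := π*ε/(1+ε) with hθdef
  set C := (1+ε)/((1+2*ε)*(ε*(2+ε))) + (1+ε)*(1+2*ε)/(ε*(2+3*ε)) with hCdef
  have step1 : ((1/(1+2*ε))^2 + 1)*π/(4*(1+ε)) + π*(1+2*ε)/(2*(1+ε)) - Real.sin θ * C
      ≤ ((1/(1+2*ε))^2 + 1)*π/(4*(1+ε)) + π*(1+2*ε)/(2*(1+ε)) - (θ - θ^3/6) * C := by
    have := mul_le_mul_of_nonneg_right hsin hC
    linarith
  refine le_trans step1 ?_
  rw [← sub_nonneg, hθdef, hCdef]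
  have hπ2 : (98696/10000 : ℝ) ≤ π^2 := by nlinarith [Real.pi_gt_d6]
  have hN : 4*(3+π^2)*π/9 * ε^2
      - (((1/(1+2*ε))^2 + 1)*π/(4*(1+ε)) + π*(1+2*ε)/(2*(1+ε))
        - (π*ε/(1+ε) - (π*ε/(1+ε))^3/6)
          * ((1+ε)/((1+2*ε)*(ε*(2+ε))) + (1+ε)*(1+2*ε)/(ε*(2+3*ε))))
      = π * ((-60*ε^2 + 504*ε^3 + 4176*ε^4 + 11016*ε^5 + 14508*ε^6 + 10368*ε^7
              + 3840*ε^8 + 576*ε^9)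
          + π^2 * (ε^2 * (40 + 432*ε + 1824*ε^2 + 3984*ε^3 + 4920*ε^4 + 3456*ε^5
              + 1280*ε^6 + 192*ε^7)))
        / (36*(1+ε)^3*(1+2*ε)^2*((2+ε)*(2+3*ε))) := by
    field_simp
    ring
  rw [hN]
  have hB2 : (0:ℝ) ≤ 40 + 432*ε + 1824*ε^2 + 3984*ε^3 + 4920*ε^4 + 3456*ε^5
      + 1280*ε^6 + 192*ε^7 := by positivity
  have hkey : (0:ℝ) ≤ (-60*ε^2 + 504*ε^3 + 4176*ε^4 + 11016*ε^5 + 14508*ε^6 + 10368*ε^7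
              + 3840*ε^8 + 576*ε^9)
          + π^2 * (ε^2 * (40 + 432*ε + 1824*ε^2 + 3984*ε^3 + 4920*ε^4 + 3456*ε^5
              + 1280*ε^6 + 192*ε^7)) := by
    have h1 : (0:ℝ) ≤ (π^2 - 98696/10000) * (ε^2 * (40 + 432*ε + 1824*ε^2 + 3984*ε^3
        + 4920*ε^4 + 3456*ε^5 + 1280*ε^6 + 192*ε^7)) := by
      apply mul_nonneg (by linarith) (by positivity)
    have h2 : (0:ℝ) ≤ 41848/125*ε^2 + 2979792/625*ε^3 + 13861344/625*ε^4 + 31460304/625*ε^5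
        + 7883304/125*ε^6 + 27798336/625*ε^7 + 2059136/125*ε^8 + 1544352/625*ε^9 := by
      positivity
    nlinarith [h1, h2]
  positivity

lemma L2_calc (n k : ℕ) (hk : n = 2*k) (hn : 2 ≤ n) (sa sb c1 c2 : ℝ)
    (hsa : 1 < sa) (hsb : 1 < sb) (hsan : sa ≠ (n:ℝ)) (hsbn : sb ≠ (n:ℝ))
    (hc1 : |c1| ≤ 1) (hc2 : |c2| ≤ 1)
    (hrel : (n:ℝ)*(sa+sb) = 2*(sa*sb))
    (f : ℝ → ℝ)
    (hf : ∀ x : ℝ, f x =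
      (if (π/sa+π/sb) * Int.fract (x/(π/sa+π/sb)) < π/sa
        then c1 * Real.sin (sa*((π/sa+π/sb) * Int.fract (x/(π/sa+π/sb))))
        else -(c2 * Real.sin (sb*((π/sa+π/sb) * Int.fract (x/(π/sa+π/sb)) - π/sa))))) :
    ∫ x in (0:ℝ)..π, (f x - Real.sin ((n:ℝ)*x))^2
      = (n:ℝ)/2 * ((c1^2+1)/2*(π/sa) + (c2^2+1)/2*(π/sb))
        - (n:ℝ)*c1*sa*Real.sin ((n:ℝ)*(π/sa))/(sa^2-(n:ℝ)^2)
        + (n:ℝ)*c2*sb*Real.sin ((n:ℝ)*(π/sa))/(sb^2-(n:ℝ)^2) := by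
  have hπ := Real.pi_pos
  have hsa0 : (0:ℝ) < sa := by linarith
  have hsb0 : (0:ℝ) < sb := by linarith
  have hn0 : (0:ℝ) < (n:ℝ) := by
    have : 0 < n := by omega
    exact_mod_cast this
  set l1 : ℝ := π/sa with hl1def
  set l2 : ℝ := π/sb with hl2def
  have hl10 : 0 < l1 := by positivity
  have hl20 : 0 < l2 := by positivity
  have hl0 : 0 < l1 + l2 := by linarith
  have hsal1 : sa * l1 = π := by rw [hl1def]; field_simp
  have hsbl2 : sb * l2 = π := by rw [hl2def]; field_simp
  have hnl : (n:ℝ)*(l1+l2) = 2*π := by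
    rw [hl1def, hl2def]
    field_simp
    linear_combination hrel
  set G : ℝ → ℝ := fun x => (f x - Real.sin ((n:ℝ)*x))^2 with hGdef
  -- periodicity
  have hper : Function.Periodic G (l1+l2) := by
    intro x
    have hfr : (x + (l1+l2))/(l1+l2) = x/(l1+l2) + 1 := by field_simp
    simp only [hGdef]
    rw [hf (x + (l1+l2)), hf x, hfr, Int.fract_add_one,
      show (n:ℝ)*(x+(l1+l2)) = (n:ℝ)*x + 2*π by linear_combination hnl,
      Real.sin_add_two_pi]
  -- integrability
  have hfbd : ∀ x, |f x| ≤ 1 := by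
    intro x
    rw [hf x]
    split_ifs with h
    · rw [abs_mul]
      calc |c1| * |Real.sin _| ≤ 1 * 1 :=
        mul_le_mul hc1 (sin_abs_le_one _) (abs_nonneg _) zero_le_one
      _ = 1 := by norm_num
    · rw [abs_neg, abs_mul]
      calc |c2| * |Real.sin _| ≤ 1 * 1 :=
        mul_le_mul hc2 (sin_abs_le_one _) (abs_nonneg _) zero_le_one
      _ = 1 := by norm_num
  have hmeas : Measurable f := by
    have hfe : f = fun x =>
        (if (π/sa+π/sb) * Int.fract (x/(π/sa+π/sb)) < π/sa
          then c1 * Real.sin (sa*((π/sa+π/sb) * Int.fract (x/(π/sa+π/sb))))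
          else -(c2 * Real.sin (sb*((π/sa+π/sb) * Int.fract (x/(π/sa+π/sb)) - π/sa)))) :=
      funext hf
    rw [hfe]
    have hy : Measurable fun x : ℝ => (π/sa+π/sb) * Int.fract (x/(π/sa+π/sb)) :=
      ((measurable_id.div_const _).fract).const_mul _
    exact Measurable.ite (measurableSet_lt hy measurable_const)
      ((Real.measurable_sin.comp (hy.const_mul sa)).const_mul c1)
      (((Real.measurable_sin.comp ((hy.sub_const _).const_mul sb)).const_mul c2).neg)
  have hintall : ∀ t₁ t₂ : ℝ, IntervalIntegrable G MeasureTheory.volume t₁ t₂ := by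
    intro t₁ t₂
    rw [intervalIntegrable_iff]
    apply MeasureTheory.Measure.integrableOn_of_bounded (M := 4)
    · exact (measure_Ioc_lt_top).ne
    · exact ((hmeas.sub (Real.measurable_sin.comp (measurable_id.const_mul _))).pow_const
        2).aestronglyMeasurable
    · refine MeasureTheory.ae_of_all _ (fun x => ?_)
      have h1 := abs_le.mp (hfbd x)
      have h2 := Real.neg_one_le_sin ((n:ℝ)*x)
      have h3 := Real.sin_le_one ((n:ℝ)*x)
      simp only [hGdef, Real.norm_eq_abs]
      rw [abs_of_nonneg (sq_nonneg _)]
      nlinarith [h1.1, h1.2]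
  -- reduce to one period
  have hπk : ((k:ℕ):ℝ) * (l1+l2) = π := by
    have hnk : (n:ℝ) = 2*(k:ℝ) := by exact_mod_cast hk
    nlinarith [hnl]
  have hred : ∫ x in (0:ℝ)..π, G x = (k:ℝ) * ∫ x in (0:ℝ)..(l1+l2), G x := by
    have h := hper.intervalIntegral_add_zsmul_eq (k:ℤ) 0 hintall
    have he1 : (0:ℝ) + (k:ℤ) • (l1+l2) = π := by
      rw [zsmul_eq_mul]
      push_cast
      linarith [hπk]
    have he2 : (0:ℝ) + (l1+l2) = l1+l2 := by ring
    rw [he1, he2] at h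
    rw [h, zsmul_eq_mul]
    push_cast
    ring
  -- split one period
  have hsplit : ∫ x in (0:ℝ)..(l1+l2), G x
      = (∫ x in (0:ℝ)..l1, G x) + ∫ x in l1..(l1+l2), G x :=
    (integral_add_adjacent_intervals (hintall 0 l1) (hintall l1 (l1+l2))).symm
  -- piece 1 congruence
  have hcong1 : ∫ x in (0:ℝ)..l1, G x
      = ∫ x in (0:ℝ)..l1, ((-c1) * Real.sin (sa*x) + Real.sin ((n:ℝ)*x + 0))^2 := by
    apply intervalIntegral.integral_congr
    intro x hx
    rw [Set.uIcc_of_le hl10.le] at hx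
    have hy : (l1+l2) * Int.fract (x/(l1+l2)) = x := by
      rw [Int.fract_eq_self.mpr ⟨div_nonneg hx.1 hl0.le, by
        rw [div_lt_one hl0]; linarith [hx.2]⟩]
      field_simp
    simp only [hGdef]
    rw [hf x, hy]
    rcases lt_or_eq_of_le hx.2 with h | h
    · rw [if_pos h, add_zero]
      ring
    · rw [if_neg (by rw [h]; exact lt_irrefl _)]
      rw [h, sub_self, mul_zero, Real.sin_zero, mul_zero, neg_zero, hsal1, Real.sin_pi,
        add_zero]
      ring
  -- piece 2 congruence and translation
  have hcong2 : ∫ x in l1..(l1+l2), G x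
      = ∫ x in (0:ℝ)..l2, (c2 * Real.sin (sb*x) + Real.sin ((n:ℝ)*x + (n:ℝ)*l1))^2 := by
    have e1 : ∫ x in l1..(l1+l2), G x
        = ∫ x in l1..(l1+l2),
            (fun z => (c2 * Real.sin (sb*z) + Real.sin ((n:ℝ)*z + (n:ℝ)*l1))^2) (x - l1) := by
      apply intervalIntegral.integral_congr
      intro x hx
      rw [Set.uIcc_of_le (by linarith : l1 ≤ l1 + l2)] at hx
      simp only [hGdef]
      rcases lt_or_eq_of_le hx.2 with h | h
      · have hy : (l1+l2) * Int.fract (x/(l1+l2)) = x := by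
          rw [Int.fract_eq_self.mpr ⟨div_nonneg (by linarith [hx.1]) hl0.le, by
            rw [div_lt_one hl0]; exact h⟩]
          field_simp
        rw [hf x, hy, if_neg (not_lt.mpr hx.1)]
        rw [show (n:ℝ)*(x-l1) + (n:ℝ)*l1 = (n:ℝ)*x by ring]
        ring
      · subst h
        rw [hf (l1+l2)]
        rw [div_self hl0.ne', Int.fract_one, mul_zero, if_pos hl10, mul_zero, Real.sin_zero,
          mul_zero]
        rw [show (n:ℝ)*(l1+l2) = 2*π by linarith [hnl], Real.sin_two_pi]
        rw [show sb*(l1+l2-l1) = π by rw [add_sub_cancel_left]; exact hsbl2]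
        rw [Real.sin_pi, show (n:ℝ)*(l1+l2-l1) + (n:ℝ)*l1 = 2*π by
          rw [add_sub_cancel_left]; linarith [hnl], Real.sin_two_pi]
        norm_num
    rw [e1, intervalIntegral.integral_comp_sub_right
      (fun z => (c2 * Real.sin (sb*z) + Real.sin ((n:ℝ)*z + (n:ℝ)*l1))^2) l1]
    rw [sub_self, add_sub_cancel_left]
  -- evaluate piece 1
  have hval1 : ∫ x in (0:ℝ)..l1, ((-c1) * Real.sin (sa*x) + Real.sin ((n:ℝ)*x + 0))^2
      = ((-c1)^2+1)/2*l1 - (1/(4*(n:ℝ))) * Real.sin (2*((n:ℝ)*l1))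
        + ((-c1)/(sa-(n:ℝ))) * Real.sin ((n:ℝ)*l1)
        - ((-c1)/(sa+(n:ℝ))) * (-Real.sin ((n:ℝ)*l1)) := by
    rw [integral_sq_sin (-c1) sa (n:ℝ) 0 l1 hsa0.ne' hn0.ne' (sub_ne_zero.mpr hsan)
      (by positivity)]
    rw [show 2*sa*l1 + 0 = 2*π by linear_combination 2*hsal1, Real.sin_two_pi]
    rw [show 2*(n:ℝ)*l1 + 2*0 = 2*((n:ℝ)*l1) by ring]
    rw [show (sa-(n:ℝ))*l1 + -0 = π - (n:ℝ)*l1 by linear_combination hsal1, Real.sin_pi_sub]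
    rw [show (sa+(n:ℝ))*l1 + 0 = (n:ℝ)*l1 + π by linear_combination hsal1, Real.sin_add_pi]
    norm_num
  -- evaluate piece 2
  have hval2 : ∫ x in (0:ℝ)..l2, (c2 * Real.sin (sb*x) + Real.sin ((n:ℝ)*x + (n:ℝ)*l1))^2
      = (c2^2+1)/2*l2 + (1/(4*(n:ℝ))) * Real.sin (2*((n:ℝ)*l1))
        - (c2/(sb-(n:ℝ))) * (-Real.sin ((n:ℝ)*l1))
        + (c2/(sb+(n:ℝ))) * Real.sin ((n:ℝ)*l1) := by
    rw [integral_sq_sin c2 sb (n:ℝ) ((n:ℝ)*l1) l2 hsb0.ne' hn0.ne' (sub_ne_zero.mpr hsbn)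
      (by positivity)]
    rw [show 2*sb*l2 + 0 = 2*π by linear_combination 2*hsbl2, Real.sin_two_pi]
    rw [show 2*(n:ℝ)*l2 + 2*((n:ℝ)*l1) = 2*π + 2*π by linear_combination 2*hnl,
      Real.sin_add_two_pi, Real.sin_two_pi]
    rw [show (sb-(n:ℝ))*l2 + -((n:ℝ)*l1) = -π by linear_combination hsbl2 - hnl,
      Real.sin_neg, Real.sin_pi]
    rw [show (sb+(n:ℝ))*l2 + (n:ℝ)*l1 = π + 2*π by linear_combination hsbl2 + hnl,
      Real.sin_add_two_pi, Real.sin_pi]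
    rw [show 2*sb*0 + 0 = 0 by ring, Real.sin_zero]
    rw [show 2*(n:ℝ)*0 + 2*((n:ℝ)*l1) = 2*((n:ℝ)*l1) by ring]
    rw [show (sb-(n:ℝ))*0 + -((n:ℝ)*l1) = -((n:ℝ)*l1) by ring, Real.sin_neg]
    rw [show (sb+(n:ℝ))*0 + (n:ℝ)*l1 = (n:ℝ)*l1 by ring]
    ring
  -- assemble
  have hgoal : ∫ x in (0:ℝ)..π, G x
      = (n:ℝ)/2 * ((c1^2+1)/2*l1 + (c2^2+1)/2*l2)
        - (n:ℝ)*c1*sa*Real.sin ((n:ℝ)*l1)/(sa^2-(n:ℝ)^2)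
        + (n:ℝ)*c2*sb*Real.sin ((n:ℝ)*l1)/(sb^2-(n:ℝ)^2) := by
    rw [hred, hsplit, hcong1, hcong2, hval1, hval2]
    have hnk : (n:ℝ) = 2*(k:ℝ) := by exact_mod_cast hk
    have hne1 : sa - (n:ℝ) ≠ 0 := sub_ne_zero.mpr hsan
    have hne2 : sb - (n:ℝ) ≠ 0 := sub_ne_zero.mpr hsbn
    have hne3 : sa + (n:ℝ) ≠ 0 := by positivity
    have hne4 : sb + (n:ℝ) ≠ 0 := by positivity
    have hne5 : sa^2 - (n:ℝ)^2 ≠ 0 := by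
      rw [show sa^2 - (n:ℝ)^2 = (sa-(n:ℝ))*(sa+(n:ℝ)) by ring]
      exact mul_ne_zero hne1 hne3
    have hne6 : sb^2 - (n:ℝ)^2 ≠ 0 := by
      rw [show sb^2 - (n:ℝ)^2 = (sb-(n:ℝ))*(sb+(n:ℝ)) by ring]
      exact mul_ne_zero hne2 hne4
    rw [show (k:ℝ) = (n:ℝ)/2 from by rw [hnk]; ring]
    field_simp
    ring
  exact hgoal

end FucikProofAux

set_option maxHeartbeats 1000000 in
theorem fucik_distSq_even_bound (n : ℕ) (hn : 2 ≤ n) (hne : Even n) (a b : ℝ)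
    (hΓ : FucikCurve n a b) :
    L2normSq (fun x => fucikEf n a b x - Real.sin ((n:ℝ)*x))
      ≤ (4*(3+π^2)*π/9) * (max (Real.sqrt a) (Real.sqrt b) / (n:ℝ) - 1)^2 := by
  obtain ⟨ha, hb, hcurve⟩ := hΓ
  rw [if_pos hne] at hcurve
  have hπ := Real.pi_pos
  have ha0 : (0:ℝ) < a := by linarith
  have hb0 : (0:ℝ) < b := by linarith
  have hsa : 1 < Real.sqrt a := by
    have := Real.sqrt_lt_sqrt zero_le_one ha
    simpa using this
  have hsb : 1 < Real.sqrt b := by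
    have := Real.sqrt_lt_sqrt zero_le_one hb
    simpa using this
  have hsa0 : (0:ℝ) < Real.sqrt a := by linarith
  have hsb0 : (0:ℝ) < Real.sqrt b := by linarith
  have haeq : a = (Real.sqrt a)^2 := (Real.sq_sqrt ha0.le).symm
  have hbeq : b = (Real.sqrt b)^2 := (Real.sq_sqrt hb0.le).symm
  have hn0 : (0:ℝ) < (n:ℝ) := by
    have : 0 < n := by omega
    exact_mod_cast this
  have hn1 : n ≠ 1 := by omega
  obtain ⟨k', hk'⟩ := hne
  have hk : n = 2*k' := by omega
  have hrel : (n:ℝ)*(Real.sqrt a + Real.sqrt b) = 2*(Real.sqrt a * Real.sqrt b) := by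
    field_simp at hcurve
    nlinarith [hcurve, Real.pi_ne_zero]
  have hL2 : L2normSq (fun x => fucikEf n a b x - Real.sin ((n:ℝ)*x))
      = ∫ x in (0:ℝ)..π, (fucikEf n a b x - Real.sin ((n:ℝ)*x))^2 := by
    rw [L2normSq, intervalIntegral.integral_of_le hπ.le,
      MeasureTheory.integral_Ioc_eq_integral_Ioo]
  rcases lt_trichotomy (Real.sqrt a) ((n:ℝ)) with hlt | heq | hgt
  · -- case sa < n, so sb > n
    have hsbgt : (n:ℝ) < Real.sqrt b := by
      by_contra hcon
      push_neg at hcon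
      nlinarith [mul_pos hsa0 hsb0]
    have h2sbn : (0:ℝ) < 2*Real.sqrt b - (n:ℝ) := by linarith
    have hsae : Real.sqrt a = (n:ℝ)*Real.sqrt b/(2*Real.sqrt b - (n:ℝ)) := by
      rw [eq_div_iff h2sbn.ne']
      nlinarith [hrel]
    obtain ⟨ε, hε0, hsbe, hεeq⟩ : ∃ ε : ℝ, 0 < ε ∧ Real.sqrt b = (n:ℝ)*(1+ε)
        ∧ Real.sqrt b/(n:ℝ) - 1 = ε := by
      refine ⟨Real.sqrt b/(n:ℝ) - 1, ?_, by field_simp; ring, rfl⟩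
      have : 1 < Real.sqrt b/(n:ℝ) := (one_lt_div hn0).mpr hsbgt
      linarith
    have hsae2 : Real.sqrt a = (n:ℝ)*(1+ε)/(1+2*ε) := by
      rw [hsae, hsbe, div_eq_div_iff (by nlinarith) (by positivity)]; ring
    have hmax : max (Real.sqrt a) (Real.sqrt b) = Real.sqrt b := max_eq_right (by linarith)
    have hbr : ¬(((n:ℝ))^2 ≤ a) := by
      push_neg
      nlinarith
    have hf1 : ∀ x : ℝ, fucikEf n a b x =
        (if (π/Real.sqrt a+π/Real.sqrt b) * Int.fract (x/(π/Real.sqrt a+π/Real.sqrt b))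
            < π/Real.sqrt a
          then (1:ℝ) * Real.sin (Real.sqrt a*((π/Real.sqrt a+π/Real.sqrt b)
            * Int.fract (x/(π/Real.sqrt a+π/Real.sqrt b))))
          else -((Real.sqrt a/Real.sqrt b) * Real.sin (Real.sqrt b*((π/Real.sqrt a+π/Real.sqrt b)
            * Int.fract (x/(π/Real.sqrt a+π/Real.sqrt b)) - π/Real.sqrt a)))) := by
      intro x
      simp only [fucikEf, hn1, if_false, if_neg hbr, one_mul, neg_mul]
    have hc2bd : |Real.sqrt a/Real.sqrt b| ≤ 1 := by
      rw [abs_div, abs_of_pos hsa0, abs_of_pos hsb0, div_le_one hsb0]; linarith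
    have hval := L2_calc n k' hk hn (Real.sqrt a) (Real.sqrt b) 1 (Real.sqrt a/Real.sqrt b)
      hsa hsb (ne_of_lt hlt) (ne_of_gt hsbgt) (by norm_num) hc2bd hrel _ hf1
    rw [hL2, hval, hmax, hεeq]
    have hσ : Real.sin ((n:ℝ)*(π/Real.sqrt a)) = -Real.sin (π*ε/(1+ε)) := by
      rw [show (n:ℝ)*(π/Real.sqrt a) = π*ε/(1+ε) + π by
        rw [hsae2]; field_simp; ring, Real.sin_add_pi]
    rw [hσ]
    refine le_trans (le_of_eq ?_) (scalar_main hε0)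
    have h1 : (0:ℝ) < 1+ε := by linarith
    have h2 : (0:ℝ) < 1+2*ε := by linarith
    have h3 : (0:ℝ) < 2+ε := by linarith
    have h4 : (0:ℝ) < 2+3*ε := by linarith
    have hA : (Real.sqrt a)^2 - ((n:ℝ))^2 = -((n:ℝ)^2*(ε*(2+3*ε))/(1+2*ε)^2) := by
      rw [hsae2]; field_simp; ring
    have hB : (Real.sqrt b)^2 - ((n:ℝ))^2 = (n:ℝ)^2*(ε*(2+ε)) := by
      rw [hsbe]; ring
    rw [hA, hB, hsae2, hsbe]
    field_simp
    ring
  · -- case sa = n : distance is zero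
    have hsbn : Real.sqrt b = (n:ℝ) := by nlinarith [hrel]
    have hzero : ∀ x : ℝ, fucikEf n a b x = Real.sin ((n:ℝ)*x) := by
      intro x
      rw [fucikEf, if_neg hn1]
      have hbr : ((n:ℝ))^2 ≤ a := by nlinarith
      rw [if_pos hbr]
      simp only [heq, hsbn]
      have hl0 : (0:ℝ) < π/(n:ℝ) + π/(n:ℝ) := by positivity
      set y : ℝ := (π/(n:ℝ) + π/(n:ℝ)) * Int.fract (x/(π/(n:ℝ) + π/(n:ℝ))) with hy
      have hsiny : Real.sin ((n:ℝ)*y) = Real.sin ((n:ℝ)*x) := by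
        rw [hy, Int.fract]
        rw [show (n:ℝ)*((π/(n:ℝ) + π/(n:ℝ)) * (x/(π/(n:ℝ) + π/(n:ℝ)) - ↑⌊x/(π/(n:ℝ) + π/(n:ℝ))⌋))
          = (n:ℝ)*x + (-⌊x/(π/(n:ℝ) + π/(n:ℝ))⌋ : ℤ) * (2*π) by push_cast; field_simp; ring]
        exact Real.sin_add_int_mul_two_pi _ _
      split_ifs with h
      · rw [div_self hn0.ne', one_mul, hsiny]
      · rw [show Real.sin ((n:ℝ)*(y - π/(n:ℝ))) = Real.sin ((n:ℝ)*y - π) by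
          congr 1; field_simp]
        rw [Real.sin_sub_pi, hsiny]
        ring
    rw [hL2]
    have : ∀ x : ℝ, (fucikEf n a b x - Real.sin ((n:ℝ)*x))^2 = 0 := by
      intro x; rw [hzero x]; ring
    rw [intervalIntegral.integral_congr (g := fun _ => (0:ℝ)) (fun x _ => this x)]
    simp
    positivity
  · -- case sa > n
    have h2san : (0:ℝ) < 2*Real.sqrt a - (n:ℝ) := by linarith
    have hsbe : Real.sqrt b = (n:ℝ)*Real.sqrt a/(2*Real.sqrt a - (n:ℝ)) := by
      rw [eq_div_iff h2san.ne']
      nlinarith [hrel]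
    obtain ⟨ε, hε0, hsae, hεeq⟩ : ∃ ε : ℝ, 0 < ε ∧ Real.sqrt a = (n:ℝ)*(1+ε)
        ∧ Real.sqrt a/(n:ℝ) - 1 = ε := by
      refine ⟨Real.sqrt a/(n:ℝ) - 1, ?_, by field_simp; ring, rfl⟩
      have : 1 < Real.sqrt a/(n:ℝ) := (one_lt_div hn0).mpr hgt
      linarith
    have hsbe2 : Real.sqrt b = (n:ℝ)*(1+ε)/(1+2*ε) := by
      rw [hsbe, hsae, div_eq_div_iff (by nlinarith) (by positivity)]; ring
    have hsblt : Real.sqrt b < (n:ℝ) := by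
      rw [hsbe2, div_lt_iff₀ (by positivity)]; nlinarith
    have hmax : max (Real.sqrt a) (Real.sqrt b) = Real.sqrt a := max_eq_left (by linarith)
    have hbr : ((n:ℝ))^2 ≤ a := by nlinarith
    have hf1 : ∀ x : ℝ, fucikEf n a b x =
        (if (π/Real.sqrt a+π/Real.sqrt b) * Int.fract (x/(π/Real.sqrt a+π/Real.sqrt b))
            < π/Real.sqrt a
          then (Real.sqrt b/Real.sqrt a) * Real.sin (Real.sqrt a*((π/Real.sqrt a+π/Real.sqrt b)
            * Int.fract (x/(π/Real.sqrt a+π/Real.sqrt b))))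
          else -((1:ℝ) * Real.sin (Real.sqrt b*((π/Real.sqrt a+π/Real.sqrt b)
            * Int.fract (x/(π/Real.sqrt a+π/Real.sqrt b)) - π/Real.sqrt a)))) := by
      intro x
      simp only [fucikEf, hn1, if_false, if_pos hbr, one_mul]
    have hc1bd : |Real.sqrt b/Real.sqrt a| ≤ 1 := by
      rw [abs_div, abs_of_pos hsa0, abs_of_pos hsb0, div_le_one hsa0]; linarith
    have hval := L2_calc n k' hk hn (Real.sqrt a) (Real.sqrt b) (Real.sqrt b/Real.sqrt a) 1
      hsa hsb (ne_of_gt hgt) (ne_of_lt hsblt) hc1bd (by norm_num) hrel _ hf1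
    rw [hL2, hval, hmax, hεeq]
    have hσ : Real.sin ((n:ℝ)*(π/Real.sqrt a)) = Real.sin (π*ε/(1+ε)) := by
      rw [show (n:ℝ)*(π/Real.sqrt a) = π - π*ε/(1+ε) by
        rw [hsae]; field_simp; ring, Real.sin_pi_sub]
    rw [hσ]
    refine le_trans (le_of_eq ?_) (scalar_main hε0)
    have h1 : (0:ℝ) < 1+ε := by linarith
    have h2 : (0:ℝ) < 1+2*ε := by linarith
    have h3 : (0:ℝ) < 2+ε := by linarith
    have h4 : (0:ℝ) < 2+3*ε := by linarith
    have hA : (Real.sqrt a)^2 - ((n:ℝ))^2 = (n:ℝ)^2*(ε*(2+ε)) := by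
      rw [hsae]; ring
    have hB : (Real.sqrt b)^2 - ((n:ℝ))^2 = -((n:ℝ)^2*(ε*(2+3*ε))/(1+2*ε)^2) := by
      rw [hsbe2]; field_simp; ring
    rw [hA, hB, hsae, hsbe2]
    field_simp
    ring
end

section
/- For each k ∈ ℕ, the map T_k : L²(0,π) → L²(0,π) defined by (T_k g)(x) = g*(kx/2) is a bounded linear operator whose operator norm equals 1 if k is even and √(1 + 1/k) (i.e., √((2m+2)/(2m+1)) for k = 2m+1) if k is odd. -/
open MeasureTheory Real Set Filter

/-- The antiperiodic extension `g*` of a function `g` defined on `(0,π)`. -/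
noncomputable def antiperExt (g : ℝ → ℝ) (x : ℝ) : ℝ :=
  (-1 : ℝ) ^ ⌊x / π⌋ * g (x - π * (⌊x / π⌋ : ℤ))

/-- The dilation operator `T_k g (x) = g*(k x / 2)`. -/
noncomputable def Tk (k : ℕ) (g : ℝ → ℝ) (x : ℝ) : ℝ := antiperExt g ((k : ℝ) * x / 2)


open intervalIntegral

section AuxTk

lemma antiperExt_sq_periodic (g : ℝ → ℝ) :
    Function.Periodic (fun x => (antiperExt g x)^2) π := by
  intro x
  have hπ : (0:ℝ) < π := Real.pi_pos
  have hfloor : ⌊(x + π) / π⌋ = ⌊x / π⌋ + 1 := by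
    rw [add_div, div_self hπ.ne', Int.floor_add_one]
  have harg : x + π - π * ((⌊x / π⌋ : ℤ) + 1 : ℤ) = x - π * (⌊x / π⌋ : ℤ) := by
    push_cast; ring
  simp only [antiperExt, hfloor, harg, zpow_add_one₀ (by norm_num : (-1:ℝ) ≠ 0)]
  ring

lemma antiperExt_eq_of_mem {g : ℝ → ℝ} {x : ℝ} (h0 : 0 ≤ x) (h1 : x < π) :
    antiperExt g x = g x := by
  have : ⌊x / π⌋ = 0 := by
    rw [Int.floor_eq_zero_iff]
    constructor
    · positivity
    · rw [div_lt_one Real.pi_pos]; exact h1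
  simp [antiperExt, this]

lemma antiperExt_measurable {g : ℝ → ℝ} (hg : Measurable g) :
    Measurable (antiperExt g) := by
  have h1 : Measurable fun x : ℝ => ⌊x / π⌋ := (measurable_id.div_const π).floor
  have h2 : Measurable fun x : ℝ => ((-1 : ℝ) ^ ⌊x / π⌋ : ℝ) :=
    (measurable_from_top (f := fun n : ℤ => ((-1:ℝ)^n : ℝ))).comp h1
  have h3 : Measurable fun x : ℝ => x - π * (⌊x / π⌋ : ℤ) :=
    measurable_id.sub (measurable_const.mul
      ((measurable_from_top (f := fun n : ℤ => (n : ℝ))).comp h1))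
  exact h2.mul (hg.comp h3)

lemma periodic_intervalIntegrable_all {f : ℝ → ℝ} {T : ℝ} (hT : 0 < T)
    (hp : Function.Periodic f T) (h : IntervalIntegrable f volume 0 T) :
    ∀ a b, IntervalIntegrable f volume a b := by
  have hstep : ∀ n : ℤ, IntervalIntegrable f volume (n * T) (n * T + T) := by
    intro n
    have h2 := h.comp_add_right (-(n * T))
    have heq : (fun x => f (x + -(n * T))) = f := funext fun x => by
      simpa [sub_eq_add_neg] using hp.sub_int_mul_eq (x := x) n
    rw [heq] at h2
    simpa [sub_neg_eq_add, add_comm] using h2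
  have hchain : ∀ (n : ℤ) (j : ℕ), IntervalIntegrable f volume (n * T) (n * T + j * T) := by
    intro n j
    induction j with
    | zero => simp
    | succ j ih =>
      have h3 := hstep (n + j)
      have e1 : ((n + (j:ℤ) : ℤ) : ℝ) * T = (n:ℝ) * T + (j:ℝ) * T := by push_cast; ring
      rw [e1] at h3
      have := ih.trans h3
      have e2 : (n:ℝ) * T + ((j+1 : ℕ) : ℝ) * T = (n:ℝ) * T + (j:ℝ) * T + T := by
        push_cast; ring
      rw [e2]; exact this
  have main : ∀ a b, a ≤ b → IntervalIntegrable f volume a b := by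
    intro a b hab
    set n : ℤ := ⌊a / T⌋ with hn
    have hna : (n : ℝ) * T ≤ a := by
      rw [hn]
      calc (⌊a / T⌋ : ℝ) * T ≤ (a / T) * T := by gcongr; exact Int.floor_le _
        _ = a := div_mul_cancel₀ a hT.ne'
    obtain ⟨j, hj⟩ := exists_nat_ge ((b - n * T) / T)
    have hjb : b ≤ n * T + j * T := by
      have := (div_le_iff₀ hT).mp hj
      linarith
    exact (hchain n j).mono_set (by
      rw [uIcc_of_le hab, uIcc_of_le (by linarith)]
      exact Icc_subset_Icc hna hjb)
  intro a b
  rcases le_total a b with hab | hab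
  · exact main a b hab
  · exact (main b a hab).symm

section
variable {g : ℝ → ℝ}

lemma F_integrable_base (hgi : IntegrableOn (fun x => (g x)^2) (Ioo 0 π) volume) :
    IntervalIntegrable (fun y => (antiperExt g y)^2) volume 0 π := by
  rw [intervalIntegrable_iff_integrableOn_Ioo_of_le Real.pi_pos.le]
  exact hgi.congr_fun (fun x hx => by
    rw [antiperExt_eq_of_mem hx.1.le hx.2]) measurableSet_Ioo

lemma F_int_all (hgi : IntegrableOn (fun x => (g x)^2) (Ioo 0 π) volume) :
    ∀ a b, IntervalIntegrable (fun y => (antiperExt g y)^2) volume a b :=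
  periodic_intervalIntegrable_all Real.pi_pos (antiperExt_sq_periodic g)
    (F_integrable_base hgi)

lemma F_integral_base :
    ∫ y in (0:ℝ)..π, (antiperExt g y)^2 = ∫ x in Ioo (0:ℝ) π, (g x)^2 := by
  rw [intervalIntegral.integral_of_le Real.pi_pos.le, integral_Ioc_eq_integral_Ioo]
  exact setIntegral_congr_fun measurableSet_Ioo
    (fun x hx => by rw [antiperExt_eq_of_mem hx.1.le hx.2])

lemma F_integral_half :
    ∫ y in (0:ℝ)..(π/2), (antiperExt g y)^2 = ∫ x in Ioo (0:ℝ) (π/2), (g x)^2 := by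
  rw [intervalIntegral.integral_of_le (by positivity : (0:ℝ) ≤ π/2),
    integral_Ioc_eq_integral_Ioo]
  exact setIntegral_congr_fun measurableSet_Ioo
    (fun x hx => by rw [antiperExt_eq_of_mem hx.1.le (hx.2.trans (by linarith [Real.pi_pos]))])

lemma Tk_sq_eq (k : ℕ) :
    (fun x => (Tk k g x)^2) = fun x => (fun y => (antiperExt g y)^2) ((k:ℝ)/2 * x) :=
  funext fun x => by simp only [Tk]; congr 1; ring

lemma Tk_normSq_aux (hgi : IntegrableOn (fun x => (g x)^2) (Ioo 0 π) volume)
    (k : ℕ) (hk : 1 ≤ k) :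
    ∫ x in Ioo (0:ℝ) π, (Tk k g x)^2
      = (2/(k:ℝ)) * ∫ y in (0:ℝ)..((k:ℝ)/2 * π), (antiperExt g y)^2 := by
  have hkR : ((k:ℝ)/2) ≠ 0 := by positivity
  rw [← integral_Ioc_eq_integral_Ioo, ← intervalIntegral.integral_of_le Real.pi_pos.le,
    Tk_sq_eq k,
    intervalIntegral.integral_comp_mul_left (fun y => (antiperExt g y)^2) hkR]
  simp only [mul_zero, smul_eq_mul]
  congr 1
  field_simp

lemma Tk_sq_integrableOn (hgi : IntegrableOn (fun x => (g x)^2) (Ioo 0 π) volume)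
    (k : ℕ) (hk : 1 ≤ k) :
    IntegrableOn (fun x => (Tk k g x)^2) (Ioo 0 π) volume := by
  have hkR : ((k:ℝ)/2) ≠ 0 := by positivity
  rw [← intervalIntegrable_iff_integrableOn_Ioo_of_le Real.pi_pos.le, Tk_sq_eq k]
  have h := (F_int_all hgi 0 ((k:ℝ)/2 * π)).comp_mul_left (c := (k:ℝ)/2)
  have e0 : (0:ℝ) / ((k:ℝ)/2) = 0 := by simp
  have e1 : ((k:ℝ)/2 * π) / ((k:ℝ)/2) = π := by field_simp
  rwa [e0, e1] at h
end

section
variable {g : ℝ → ℝ}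

lemma F_integral_even (hgi : IntegrableOn (fun x => (g x)^2) (Ioo 0 π) volume) (m : ℕ) :
    ∫ y in (0:ℝ)..((m:ℝ) * π), (antiperExt g y)^2
      = (m:ℝ) * ∫ x in Ioo (0:ℝ) π, (g x)^2 := by
  have h := (antiperExt_sq_periodic g).intervalIntegral_add_zsmul_eq (m:ℤ) 0 (F_int_all hgi)
  simp only [zero_add, zsmul_eq_mul, Int.cast_natCast] at h
  rw [h, F_integral_base]

lemma F_integral_odd (hgi : IntegrableOn (fun x => (g x)^2) (Ioo 0 π) volume) (m : ℕ) :
    ∫ y in (0:ℝ)..((m:ℝ) * π + π/2), (antiperExt g y)^2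
      = (m:ℝ) * (∫ x in Ioo (0:ℝ) π, (g x)^2) + ∫ x in Ioo (0:ℝ) (π/2), (g x)^2 := by
  have hsplit := intervalIntegral.integral_add_adjacent_intervals
    (F_int_all hgi 0 (π/2)) (F_int_all hgi (π/2) ((m:ℝ) * π + π/2))
  have h2 := (antiperExt_sq_periodic g).intervalIntegral_add_zsmul_eq (m:ℤ) (π/2)
    (F_int_all hgi)
  have h3 := (antiperExt_sq_periodic g).intervalIntegral_add_eq (π/2) 0
  simp only [zero_add, zsmul_eq_mul, Int.cast_natCast] at h2 h3
  have e : (m:ℝ) * π + π/2 = π/2 + (m:ℝ) * π := by ring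
  rw [e] at hsplit
  rw [e, ← hsplit, h2, h3, F_integral_base, F_integral_half]
  ring
end

section
variable {g : ℝ → ℝ}

lemma Tk_normSq_even (hgi : IntegrableOn (fun x => (g x)^2) (Ioo 0 π) volume)
    (m : ℕ) (hm : 1 ≤ m) :
    ∫ x in Ioo (0:ℝ) π, (Tk (2*m) g x)^2 = ∫ x in Ioo (0:ℝ) π, (g x)^2 := by
  have e : ((2*m : ℕ):ℝ)/2 * π = (m:ℝ) * π := by push_cast; ring
  rw [Tk_normSq_aux hgi (2*m) (by omega), e, F_integral_even hgi m]
  have hm0 : (m:ℝ) ≠ 0 := by positivity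
  push_cast
  field_simp

lemma Tk_normSq_odd (hgi : IntegrableOn (fun x => (g x)^2) (Ioo 0 π) volume) (m : ℕ) :
    ∫ x in Ioo (0:ℝ) π, (Tk (2*m+1) g x)^2
      = (2/((2*m+1 : ℕ):ℝ)) * ((m:ℝ) * (∫ x in Ioo (0:ℝ) π, (g x)^2)
          + ∫ x in Ioo (0:ℝ) (π/2), (g x)^2) := by
  have e : ((2*m+1 : ℕ):ℝ)/2 * π = (m:ℝ) * π + π/2 := by push_cast; ring
  rw [Tk_normSq_aux hgi (2*m+1) (by omega), e, F_integral_odd hgi m]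
end

lemma Tk_ae_eq {g g₀ : ℝ → ℝ} (k : ℕ) (hk : 1 ≤ k)
    (h : g =ᵐ[volume.restrict (Ioo (0:ℝ) π)] g₀) :
    Tk k g =ᵐ[volume.restrict (Ioo (0:ℝ) π)] Tk k g₀ := by
  have hπ : (0:ℝ) < π := Real.pi_pos
  have hkR : ((k:ℝ)/2) ≠ 0 := by positivity
  obtain ⟨N, hNsub, hNmeas, hNnull⟩ :=
    exists_measurable_superset_of_null (ae_iff.mp h)
  rw [Measure.restrict_apply hNmeas] at hNnull
  set M : Set ℝ := (N ∩ Ioo 0 π) ∪ {0} with hM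
  have hMmeas : MeasurableSet M := (hNmeas.inter measurableSet_Ioo).union
    (measurableSet_singleton 0)
  have hMnull : volume M = 0 := measure_union_null hNnull (by simp)
  have hsub : {x : ℝ | Tk k g x ≠ Tk k g₀ x}
      ⊆ ⋃ j : ℤ, (fun x : ℝ => (k:ℝ)/2 * x)⁻¹' ((fun y => y + (-(π * j)))⁻¹' M) := by
    intro x hx
    set z : ℝ := (k:ℝ) * x / 2 with hz
    set j : ℤ := ⌊z / π⌋ with hj
    set y : ℝ := z - π * j with hy
    have hy0 : 0 ≤ y := by
      have := Int.floor_le (z / π)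
      have : (j:ℝ) * π ≤ z := by
        rw [hj]
        calc (⌊z/π⌋:ℝ) * π ≤ z/π * π :=
              mul_le_mul_of_nonneg_right (Int.floor_le _) hπ.le
          _ = z := div_mul_cancel₀ z hπ.ne'
      simp only [hy]; linarith
    have hy1 : y < π := by
      have h2 : z / π < j + 1 := Int.lt_floor_add_one _
      have : z < (j + 1 : ℝ) * π := by
        calc z = z / π * π := (div_mul_cancel₀ z hπ.ne').symm
          _ < ((j:ℝ) + 1) * π := mul_lt_mul_of_pos_right h2 hπ
      simp only [hy]; nlinarith
    have hgy : g y ≠ g₀ y := by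
      intro hcon
      apply hx
      simp only [Tk, antiperExt, ← hz, ← hj, ← hy, hcon]
    have hyM : y ∈ M := by
      rcases eq_or_lt_of_le hy0 with h0 | h0
      · right; simp [← h0]
      · left; exact ⟨hNsub hgy, h0, hy1⟩
    refine mem_iUnion.mpr ⟨j, ?_⟩
    simp only [mem_preimage]
    have : (k:ℝ)/2 * x + -(π * j) = y := by rw [hy, hz]; ring
    rwa [this]
  have hnull2 : volume {x : ℝ | Tk k g x ≠ Tk k g₀ x} = 0 := by
    refine measure_mono_null hsub (measure_iUnion_null fun j => ?_)
    have h1 : volume ((fun y : ℝ => y + (-(π * j)))⁻¹' M) = 0 := by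
      rw [measure_preimage_add_right volume _ M, hMnull]
    calc volume ((fun x : ℝ => (k:ℝ)/2 * x)⁻¹' ((fun y => y + (-(π * j)))⁻¹' M))
        = ENNReal.ofReal |((k:ℝ)/2)⁻¹| * volume ((fun y : ℝ => y + (-(π * j)))⁻¹' M) :=
          Real.volume_preimage_mul_left hkR _
      _ = 0 := by rw [h1, mul_zero]
  exact ae_restrict_of_ae (ae_iff.mpr hnull2)

end AuxTk

theorem Tk_bounded_linear_opNorm (k : ℕ) (hk : 1 ≤ k) :
    (∀ g h : ℝ → ℝ, ∀ x : ℝ, Tk k (fun y => g y + h y) x = Tk k g x + Tk k h x) ∧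
    (∀ (r : ℝ) (g : ℝ → ℝ) (x : ℝ), Tk k (fun y => r * g y) x = r * Tk k g x) ∧
    (∀ g : ℝ → ℝ, MeasureTheory.MemLp g 2 (MeasureTheory.volume.restrict (Ioo (0:ℝ) π)) →
      MeasureTheory.MemLp (Tk k g) 2 (MeasureTheory.volume.restrict (Ioo (0:ℝ) π))) ∧
    IsLUB {r : ℝ | ∃ g : ℝ → ℝ,
        MeasureTheory.MemLp g 2 (MeasureTheory.volume.restrict (Ioo (0:ℝ) π)) ∧
        L2normSq g ≠ 0 ∧
        r = Real.sqrt (L2normSq (Tk k g)) / Real.sqrt (L2normSq g)}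
      (if Even k then 1 else Real.sqrt (1 + 1/(k:ℝ))) := by
  have hπ : (0:ℝ) < π := Real.pi_pos
  have hfinite : IsFiniteMeasure (volume.restrict (Ioo (0:ℝ) π)) := by
    constructor
    rw [Measure.restrict_apply_univ, Real.volume_Ioo]
    exact ENNReal.ofReal_lt_top
  -- a helper for processing an arbitrary MemLp function
  have setup : ∀ g : ℝ → ℝ,
      MemLp g 2 (volume.restrict (Ioo (0:ℝ) π)) →
      ∃ g₀ : ℝ → ℝ, Measurable g₀ ∧
        IntegrableOn (fun x => (g₀ x)^2) (Ioo 0 π) volume ∧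
        g =ᵐ[volume.restrict (Ioo (0:ℝ) π)] g₀ ∧
        L2normSq g = ∫ x in Ioo (0:ℝ) π, (g₀ x)^2 ∧
        L2normSq (Tk k g) = ∫ x in Ioo (0:ℝ) π, (Tk k g₀ x)^2 := by
    intro g hg
    have hgm : Measurable (hg.1.mk g) := hg.1.stronglyMeasurable_mk.measurable
    set g₀ : ℝ → ℝ := hg.1.mk g with hg₀def
    have heq : g =ᵐ[volume.restrict (Ioo (0:ℝ) π)] g₀ := hg.1.ae_eq_mk
    have hg₀ : MemLp g₀ 2 (volume.restrict (Ioo (0:ℝ) π)) := hg.ae_eq heq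
    have hgi : IntegrableOn (fun x => (g₀ x)^2) (Ioo 0 π) volume :=
      (memLp_two_iff_integrable_sq hg₀.1).mp hg₀
    refine ⟨g₀, hgm, hgi, heq, ?_, ?_⟩
    · exact integral_congr_ae (heq.fun_comp (fun t => t^2))
    · exact integral_congr_ae ((Tk_ae_eq k hk heq).fun_comp (fun t => t^2))
  refine ⟨?_, ?_, ?_, ?_⟩
  · intro g h x
    simp only [Tk, antiperExt, mul_add]
  · intro r g x
    simp only [Tk, antiperExt]
    ring
  · intro g hg
    obtain ⟨g₀, hgm, hgi, heq, _, _⟩ := setup g hg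
    have hmeas : Measurable (Tk k g₀) := by
      unfold Tk
      exact (antiperExt_measurable hgm).comp
        ((measurable_id.const_mul ((k:ℝ))).div_const 2)
    have h₀ : MemLp (Tk k g₀) 2 (volume.restrict (Ioo (0:ℝ) π)) := by
      rw [memLp_two_iff_integrable_sq hmeas.aestronglyMeasurable]
      exact Tk_sq_integrableOn hgi k hk
    exact h₀.ae_eq (Tk_ae_eq k hk heq).symm
  · -- the operator norm
    apply IsGreatest.isLUB
    constructor
    · -- membership : the bound is attained
      by_cases hke : Even k
      · simp only [hke, if_pos]
        obtain ⟨m, hm2⟩ := hke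
        have hkm : k = 2*m := by omega
        have hm1 : 1 ≤ m := by omega
        refine ⟨fun _ => (1:ℝ), memLp_const 1, ?_, ?_⟩
        · have : L2normSq (fun _ => (1:ℝ)) = π := by
            simp only [L2normSq, one_pow]
            rw [setIntegral_const]
            simp [Real.volume_Ioo, ENNReal.toReal_ofReal hπ.le, hπ.le]
          rw [this]; exact Real.pi_ne_zero
        · have hgi : IntegrableOn (fun x => ((1:ℝ))^2) (Ioo 0 π) volume := by
            simp only [one_pow]
            exact integrableOn_const (by rw [Real.volume_Ioo]; exact ENNReal.ofReal_lt_top.ne)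
          have hI : L2normSq (fun _ => (1:ℝ)) = π := by
            simp only [L2normSq, one_pow]
            rw [setIntegral_const]
            simp [Real.volume_Ioo, ENNReal.toReal_ofReal hπ.le, hπ.le]
          have hI' : L2normSq (Tk k (fun _ => (1:ℝ))) = π := by
            show (∫ x in Ioo (0:ℝ) π, (Tk k (fun _ => (1:ℝ)) x)^2) = π
            rw [hkm, Tk_normSq_even hgi m hm1]
            simp only [one_pow]
            rw [setIntegral_const]
            simp [Real.volume_Ioo, ENNReal.toReal_ofReal hπ.le, hπ.le]
          rw [hI, hI', div_self (by positivity : Real.sqrt π ≠ 0)]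
      · simp only [hke, if_neg, if_false]
        obtain ⟨m, hm2⟩ := Nat.not_even_iff_odd.mp hke
        set g : ℝ → ℝ := (Ioo (0:ℝ) (π/2)).indicator (fun _ => (1:ℝ)) with hgdef
        have hgsq : ∀ x, (g x)^2 = g x := by
          intro x
          by_cases hx : x ∈ Ioo (0:ℝ) (π/2) <;> simp [hgdef, indicator, hx]
        have hmg : MemLp g 2 (volume.restrict (Ioo (0:ℝ) π)) :=
          (memLp_const 1).indicator measurableSet_Ioo
        have hint : ∀ s : Set ℝ, MeasurableSet s →
            (∫ x in s, (g x)^2) = (volume (s ∩ Ioo 0 (π/2))).toReal := by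
          intro s hs
          simp only [hgsq]
          rw [hgdef, setIntegral_indicator measurableSet_Ioo, setIntegral_const, smul_eq_mul,
            mul_one, measureReal_def]
        have hI : L2normSq g = π/2 := by
          show (∫ x in Ioo (0:ℝ) π, (g x)^2) = π/2
          rw [hint _ measurableSet_Ioo]
          rw [inter_eq_self_of_subset_right (Ioo_subset_Ioo le_rfl (by linarith))]
          rw [Real.volume_Ioo, show π/2 - 0 = π/2 by ring,
            ENNReal.toReal_ofReal (by positivity)]
        have hJ : (∫ x in Ioo (0:ℝ) (π/2), (g x)^2) = π/2 := by
          rw [hint _ measurableSet_Ioo, inter_self, Real.volume_Ioo,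
            show π/2 - 0 = π/2 by ring, ENNReal.toReal_ofReal (by positivity)]
        have hgi : IntegrableOn (fun x => (g x)^2) (Ioo 0 π) volume := by
          have := (memLp_two_iff_integrable_sq hmg.1).mp hmg
          exact this
        have hI' : L2normSq (Tk k g) = (2/(k:ℝ)) * ((m:ℝ) * (π/2) + π/2) := by
          show (∫ x in Ioo (0:ℝ) π, (Tk k g x)^2) = (2/(k:ℝ)) * ((m:ℝ) * (π/2) + π/2)
          rw [hm2, Tk_normSq_odd hgi m]
          rw [← hm2, hJ]
          show (2/(k:ℝ)) * ((m:ℝ) * (∫ x in Ioo (0:ℝ) π, (g x)^2) + π/2) = _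
          rw [show (∫ x in Ioo (0:ℝ) π, (g x)^2) = L2normSq g from rfl, hI]
        refine ⟨g, hmg, ?_, ?_⟩
        · rw [hI]; positivity
        · rw [hI, hI']
          have hk0 : (0:ℝ) < k := by exact_mod_cast hk
          have hnum : (0:ℝ) ≤ (2/(k:ℝ)) * ((m:ℝ) * (π/2) + π/2) := by positivity
          rw [← Real.sqrt_div hnum]
          congr 1
          have : (k:ℝ) = 2*(m:ℝ)+1 := by exact_mod_cast congrArg (Nat.cast : ℕ → ℝ) hm2
          rw [this]
          have hm0 : (0:ℝ) < 2*(m:ℝ)+1 := by positivity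
          field_simp
          ring
    · -- upper bound
      rintro r ⟨g, hg, hne, rfl⟩
      obtain ⟨g₀, hgm, hgi, heq, hIeq, hI'eq⟩ := setup g hg
      set I : ℝ := ∫ x in Ioo (0:ℝ) π, (g₀ x)^2 with hIdef
      have hInonneg : 0 ≤ I := setIntegral_nonneg measurableSet_Ioo (fun x _ => sq_nonneg _)
      have hIpos : 0 < I := lt_of_le_of_ne hInonneg (fun h => hne (by rw [hIeq, ← h]))
      have hsqrtIpos : 0 < Real.sqrt I := Real.sqrt_pos.mpr hIpos
      by_cases hke : Even k
      · simp only [hke, if_pos]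
        obtain ⟨m, hm2⟩ := hke
        have hkm : k = 2*m := by omega
        have hm1 : 1 ≤ m := by omega
        have hI' : L2normSq (Tk k g) = I := by
          rw [hI'eq, hkm, Tk_normSq_even hgi m hm1]
        rw [hI', hIeq]
        rw [div_self hsqrtIpos.ne']
      · simp only [hke, if_neg, if_false]
        obtain ⟨m, hm2⟩ := Nat.not_even_iff_odd.mp hke
        have hk0 : (0:ℝ) < k := by exact_mod_cast hk
        set J : ℝ := ∫ x in Ioo (0:ℝ) (π/2), (g₀ x)^2 with hJdef
        have hJle : J ≤ I := by
          refine setIntegral_mono_set hgi ?_ ?_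
          · exact Filter.Eventually.of_forall (fun x => sq_nonneg _)
          · exact HasSubset.Subset.eventuallyLE (Ioo_subset_Ioo le_rfl (by linarith))
        have hI' : L2normSq (Tk k g) = (2/(k:ℝ)) * ((m:ℝ) * I + J) := by
          rw [hI'eq, hm2, Tk_normSq_odd hgi m, ← hm2]
        have hbound : L2normSq (Tk k g) ≤ (1 + 1/(k:ℝ)) * I := by
          rw [hI']
          have hkc : (k:ℝ) = 2*(m:ℝ)+1 := by exact_mod_cast congrArg (Nat.cast : ℕ → ℝ) hm2
          have h1 : (2/(k:ℝ)) * ((m:ℝ) * I + J) ≤ (2/(k:ℝ)) * ((m:ℝ) * I + I) := by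
            gcongr
          refine h1.trans (le_of_eq ?_)
          rw [hkc]
          have hm0 : (0:ℝ) < 2*(m:ℝ)+1 := by positivity
          field_simp
          ring
        rw [hIeq]
        rw [div_le_iff₀ hsqrtIpos]
        calc Real.sqrt (L2normSq (Tk k g)) ≤ Real.sqrt ((1 + 1/(k:ℝ)) * I) :=
              Real.sqrt_le_sqrt hbound
          _ = Real.sqrt (1 + 1/(k:ℝ)) * Real.sqrt I :=
              Real.sqrt_mul (by positivity) I
end
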